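/- arXiv:2106.12059 — 5 statements merged into one kernel-verified Lean document; each statement's English description precedes it below -/
import Mathlib

section
/- (Gumbel-max trick) Let s₁, …, sₙ be real numbers and let ε₁, …, εₙ be i.i.d. Gumbel(0, 1) random variables. Then for each index i, the probability that sᵢ + εᵢ is the strict maximum of {s₁ + ε₁, …, sₙ + εₙ} equals exp(sᵢ)/∑ⱼ exp(sⱼ). -/
open MeasureTheory

/-- `G` is Gumbel distributed with location `μ` and scale `β` under `P`. -/
def IsGumbel {Ω : Type*} [MeasurableSpace Ω] (P : Measure Ω) (G : Ω → ℝ) (μ β : ℝ) : Prop :=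
  ∀ g : ℝ, P {ω | G ω ≤ g} = ENNReal.ofReal (Real.exp (-Real.exp (-(g - μ) / β)))

open Real Filter Set Topology

lemma gumbelHasDeriv (a : ℝ) (ha : a ≠ 0) (x : ℝ) :
    HasDerivAt (fun y : ℝ => Real.exp (-a * Real.exp (-y)) / a)
      (Real.exp (-x) * Real.exp (-a * Real.exp (-x))) x := by
  have h1 : HasDerivAt (fun y : ℝ => -y) (-1) x := (hasDerivAt_id x).neg
  have h2 : HasDerivAt (fun y : ℝ => Real.exp (-y)) (-Real.exp (-x)) x := by
    simpa using h1.exp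
  have h3 := (h2.const_mul (-a)).exp.div_const a
  convert h3 using 1
  · rfl
  · rfl
  rw [eq_div_iff ha]
  ring

lemma gumbelTendstoBot (a : ℝ) (ha : 0 < a) :
    Tendsto (fun y : ℝ => Real.exp (-a * Real.exp (-y)) / a) atBot (𝓝 0) := by
  have h1 : Tendsto (fun y : ℝ => Real.exp (-y)) atBot atTop :=
    Real.tendsto_exp_atTop.comp tendsto_neg_atBot_atTop
  have h2 : Tendsto (fun y : ℝ => -a * Real.exp (-y)) atBot atBot := by
    have h := tendsto_neg_atTop_atBot.comp (h1.const_mul_atTop ha)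
    simp only [Function.comp_def] at h
    simpa only [neg_mul] using h
  have h3 := Real.tendsto_exp_atBot.comp h2
  simpa [Function.comp] using h3.div_const a

lemma gumbelTendstoTop (a : ℝ) :
    Tendsto (fun y : ℝ => Real.exp (-a * Real.exp (-y)) / a) atTop (𝓝 (1 / a)) := by
  have h1 : Tendsto (fun y : ℝ => Real.exp (-y)) atTop (𝓝 0) :=
    Real.tendsto_exp_atBot.comp tendsto_neg_atTop_atBot
  have h2 : Tendsto (fun y : ℝ => -a * Real.exp (-y)) atTop (𝓝 0) := by
    simpa using h1.const_mul (-a)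
  have h3 : Tendsto (fun y : ℝ => Real.exp (-a * Real.exp (-y))) atTop (𝓝 1) := by
    simpa [Function.comp_def] using (Real.continuous_exp.tendsto 0).comp h2
  simpa using h3.div_const a

lemma gumbelIntegrable (a : ℝ) (ha : 0 < a) :
    Integrable (fun x : ℝ => Real.exp (-x) * Real.exp (-a * Real.exp (-x))) := by
  set f : ℝ → ℝ := fun x => Real.exp (-x) * Real.exp (-a * Real.exp (-x)) with hf
  have hcont : Continuous f := by fun_prop
  have hnn : ∀ x, 0 ≤ f x := fun x => by positivity
  refine integrable_of_intervalIntegral_norm_bounded (μ := volume)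
    (a := fun r : ℝ => -r) (b := fun r : ℝ => r) (l := atTop) (1 / a)
    (fun r => hcont.integrableOn_Ioc) tendsto_neg_atTop_atBot tendsto_id ?_
  filter_upwards [eventually_ge_atTop (0:ℝ)] with r hr
  have hle : -r ≤ r := by linarith
  have heq : (∫ x in (-r)..r, ‖f x‖) = ∫ x in (-r)..r, f x := by
    apply intervalIntegral.integral_congr
    intro x _
    exact abs_of_nonneg (hnn x)
  rw [heq, intervalIntegral.integral_eq_sub_of_hasDerivAt
    (fun x _ => gumbelHasDeriv a ha.ne' x)
    (hcont.intervalIntegrable _ _)]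
  have e1 : Real.exp (-a * Real.exp (-r)) ≤ 1 := by
    apply Real.exp_le_one_iff.mpr
    nlinarith [Real.exp_pos (-r)]
  have e2 : (0:ℝ) < Real.exp (-a * Real.exp (-(-r))) := Real.exp_pos _
  rw [div_sub_div_same, div_le_div_iff₀ ha ha]
  nlinarith

lemma gumbelIntegral (a : ℝ) (ha : 0 < a) :
    (∫ x : ℝ, Real.exp (-x) * Real.exp (-a * Real.exp (-x))) = 1 / a := by
  rw [integral_of_hasDerivAt_of_tendsto (gumbelHasDeriv a ha.ne')
    (gumbelIntegrable a ha) (gumbelTendstoBot a ha) (gumbelTendstoTop a)]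
  simp

lemma gumbelIic (t : ℝ) :
    (∫ x in Iic t, Real.exp (-x) * Real.exp (-Real.exp (-x))) = Real.exp (-Real.exp (-t)) := by
  have h := integral_Iic_of_hasDerivAt_of_tendsto' (a := t)
    (fun x _ => gumbelHasDeriv 1 one_ne_zero x)
    ((gumbelIntegrable 1 one_pos).integrableOn) (gumbelTendstoBot 1 one_pos)
  simpa using h

theorem gumbel_max_trick {Ω : Type*} [MeasurableSpace Ω] (P : Measure Ω)
    [IsProbabilityMeasure P] (n : ℕ) (s : Fin n → ℝ) (ε : Fin n → Ω → ℝ)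
    (hmeas : ∀ i, Measurable (ε i))
    (hindep : ProbabilityTheory.iIndepFun ε P)
    (hgumbel : ∀ i, IsGumbel P (ε i) 0 1) (i : Fin n) :
    P {ω | ∀ j, j ≠ i → s j + ε j ω < s i + ε i ω} =
      ENNReal.ofReal (Real.exp (s i) / ∑ j, Real.exp (s j)) := by
  classical
  -- the cumulative distribution function
  have hF : ∀ (j : Fin n) (t : ℝ),
      P {ω | ε j ω ≤ t} = ENNReal.ofReal (Real.exp (-Real.exp (-t))) := by
    intro j t
    have h := hgumbel j t
    simpa using h
  -- the Gumbel law as a measure with density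
  set d : ℝ → ENNReal := fun x => ENNReal.ofReal (Real.exp (-x) * Real.exp (-Real.exp (-x)))
    with hd
  have hdmeas : Measurable d := by
    apply ENNReal.measurable_ofReal.comp
    fun_prop
  set ν : Measure ℝ := volume.withDensity d with hν
  have hfint : Integrable (fun x : ℝ => Real.exp (-x) * Real.exp (-Real.exp (-x))) := by
    have := gumbelIntegrable 1 one_pos
    simpa using this
  have hν_Iic : ∀ t, ν (Iic t) = ENNReal.ofReal (Real.exp (-Real.exp (-t))) := by
    intro t
    rw [hν, withDensity_apply _ measurableSet_Iic, hd]
    rw [← ofReal_integral_eq_lintegral_ofReal hfint.integrableOn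
      (Filter.Eventually.of_forall fun x => by positivity)]
    rw [gumbelIic]
  -- law of each ε j is ν
  have hmap : ∀ j, P.map (ε j) = ν := by
    intro j
    haveI := Measure.isProbabilityMeasure_map (μ := P) (hmeas j).aemeasurable
    refine Measure.ext_of_Iic (P.map (ε j)) ν (fun t => ?_)
    rw [Measure.map_apply (hmeas j) measurableSet_Iic, hν_Iic]
    exact hF j t
  -- ν has no atom, hence the strict CDF
  have hsing : ∀ t : ℝ, ν {t} = 0 := by
    intro t
    rw [hν, withDensity_apply _ (measurableSet_singleton t)]
    exact setLIntegral_measure_zero _ _ (measure_singleton t)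
  have hIio : ∀ (j : Fin n) (t : ℝ),
      P {ω | ε j ω < t} = ENNReal.ofReal (Real.exp (-Real.exp (-t))) := by
    intro j t
    have h1 : P {ω | ε j ω < t} = (P.map (ε j)) (Iio t) := by
      rw [Measure.map_apply (hmeas j) measurableSet_Iio]; rfl
    have h2 : ν (Iio t) = ν (Iic t) := by
      refine le_antisymm (measure_mono Iio_subset_Iic_self) ?_
      have hsub : Iic t ⊆ Iio t ∪ {t} := by
        intro x hx
        rcases (mem_Iic.mp hx).lt_or_eq with h | h
        · exact Or.inl h
        · exact Or.inr (by simp [h])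
      calc ν (Iic t) ≤ ν (Iio t ∪ {t}) := measure_mono hsub
        _ ≤ ν (Iio t) + ν {t} := measure_union_le _ _
        _ = ν (Iio t) := by rw [hsing, add_zero]
    rw [h1, hmap j, h2, hν_Iic]
  -- split off the i-th coordinate
  set T : Finset (Fin n) := Finset.univ.erase i with hT
  set c : Fin n → ℝ := fun j => s i - s j with hc
  set Y : Ω → ({x // x ∈ T} → ℝ) := fun ω j => ε j ω with hY
  have hYmeas : Measurable Y := measurable_pi_lambda _ (fun j => hmeas j)
  set Φ : Ω → ℝ × ({x // x ∈ T} → ℝ) := fun ω => (ε i ω, Y ω) with hΦdef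
  have hΦ : Measurable Φ := (hmeas i).prodMk hYmeas
  set B : Set (ℝ × ({x // x ∈ T} → ℝ)) :=
    {p | ∀ j : {x // x ∈ T}, p.2 j < p.1 + c j} with hB
  have hBmeas : MeasurableSet B := by
    have : B = ⋂ j : {x // x ∈ T}, {p : ℝ × ({x // x ∈ T} → ℝ) | p.2 j < p.1 + c j} := by
      ext p; simp [hB]
    rw [this]
    exact MeasurableSet.iInter fun j =>
      measurableSet_lt (measurable_snd.eval) (measurable_fst.add_const _)
  have hE : {ω | ∀ j, j ≠ i → s j + ε j ω < s i + ε i ω} = Φ ⁻¹' B := by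
    ext ω
    simp only [mem_setOf_eq, mem_preimage, hB, hΦdef, hY]
    constructor
    · intro h j
      have hji : (j : Fin n) ≠ i := Finset.ne_of_mem_erase j.2
      have := h j hji
      simp only [hc]
      linarith
    · intro h j hj
      have := h ⟨j, Finset.mem_erase.mpr ⟨hj, Finset.mem_univ j⟩⟩
      simp only [hc] at this
      linarith
  have hindepXY : ProbabilityTheory.IndepFun (ε i) Y P := by
    have hdisj : Disjoint ({i} : Finset (Fin n)) T := by
      simp [hT, Finset.disjoint_singleton_left]
    have h := hindep.indepFun_finset {i} T hdisj hmeas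
    exact h.comp (φ := fun v : ({x // x ∈ ({i} : Finset (Fin n))} → ℝ) =>
      v ⟨i, Finset.mem_singleton_self i⟩) (ψ := id) (measurable_pi_apply _) measurable_id
  haveI : IsProbabilityMeasure (P.map (ε i)) :=
    Measure.isProbabilityMeasure_map (hmeas i).aemeasurable
  haveI : IsProbabilityMeasure (P.map Y) := Measure.isProbabilityMeasure_map hYmeas.aemeasurable
  have hmapprod : P.map Φ = (P.map (ε i)).prod (P.map Y) :=
    (ProbabilityTheory.indepFun_iff_map_prod_eq_prod_map_map (hmeas i).aemeasurable
      hYmeas.aemeasurable).mp hindepXY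
  rw [hE, ← Measure.map_apply hΦ hBmeas, hmapprod, Measure.prod_apply hBmeas]
  -- compute the inner measure
  set k : ℝ := ∑ j ∈ T, Real.exp (s j - s i) with hk
  have hknn : 0 ≤ k := Finset.sum_nonneg fun _ _ => (Real.exp_pos _).le
  have hsect : ∀ x : ℝ, (P.map Y) (Prod.mk x ⁻¹' B)
      = ENNReal.ofReal (Real.exp (-(k * Real.exp (-x)))) := by
    intro x
    have hset : Prod.mk x ⁻¹' B = Set.pi univ (fun j : {x // x ∈ T} => Iio (x + c j)) := by
      ext w; simp [hB, Set.mem_pi]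
    rw [hset, Measure.map_apply hYmeas (MeasurableSet.univ_pi fun j => measurableSet_Iio)]
    have hpre : (Y ⁻¹' Set.pi univ (fun j : {x // x ∈ T} => Iio (x + c j)))
        = ⋂ j ∈ T, ε j ⁻¹' (Iio (x + c j)) := by
      ext ω
      simp [hY, Set.mem_pi, Subtype.forall]
    rw [hpre, hindep.measure_inter_preimage_eq_mul T
      (sets := fun j => Iio (x + c j)) (fun j _ => measurableSet_Iio)]
    have hterm : ∀ j ∈ T, P (ε j ⁻¹' Iio (x + c j))
        = ENNReal.ofReal (Real.exp (-Real.exp (-(x + c j)))) := fun j _ => hIio j _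
    rw [Finset.prod_congr rfl hterm,
      ← ENNReal.ofReal_prod_of_nonneg (fun j _ => (Real.exp_pos _).le)]
    congr 1
    rw [← Real.exp_sum]
    congr 1
    have : ∀ j ∈ T, -Real.exp (-(x + c j)) = -(Real.exp (s j - s i) * Real.exp (-x)) := by
      intro j _
      rw [← Real.exp_add, hc]
      ring_nf
    rw [Finset.sum_congr rfl this, hk, Finset.sum_mul]
    rw [Finset.sum_neg_distrib]
  simp only [hsect, hmap i, hν]
  have hgmeas : Measurable (fun x : ℝ => ENNReal.ofReal (Real.exp (-(k * Real.exp (-x))))) := by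
    apply ENNReal.measurable_ofReal.comp
    fun_prop
  rw [lintegral_withDensity_eq_lintegral_mul _ hdmeas hgmeas]
  have hpt : ∀ x : ℝ, (d * fun x : ℝ => ENNReal.ofReal (Real.exp (-(k * Real.exp (-x))))) x
      = ENNReal.ofReal (Real.exp (-x) * Real.exp (-(1 + k) * Real.exp (-x))) := by
    intro x
    simp only [Pi.mul_apply, hd]
    rw [← ENNReal.ofReal_mul (by positivity)]
    congr 1
    rw [mul_assoc, ← Real.exp_add, mul_eq_mul_left_iff]
    left
    rw [Real.exp_eq_exp]
    ring
  have h1k : (0:ℝ) < 1 + k := by linarith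
  simp only [hpt]
  rw [← ofReal_integral_eq_lintegral_ofReal (gumbelIntegrable (1 + k) h1k)
    (Filter.Eventually.of_forall fun x => by positivity), gumbelIntegral (1 + k) h1k]
  congr 1
  have hsum : (∑ j, Real.exp (s j)) = Real.exp (s i) + ∑ j ∈ T, Real.exp (s j) := by
    rw [hT]
    exact (Finset.add_sum_erase _ _ (Finset.mem_univ i)).symm
  have hmulk : Real.exp (s i) * (1 + k) = ∑ j, Real.exp (s j) := by
    rw [hsum, mul_add, mul_one, hk, Finset.mul_sum]
    congr 1
    refine Finset.sum_congr rfl fun j _ => ?_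
    rw [← Real.exp_add]
    ring_nf
  rw [← hmulk]
  have he : Real.exp (s i) ≠ 0 := (Real.exp_pos _).ne'
  field_simp
end

section
/- (Gumbel-max trick with coldness) Let s₁, …, sₙ be real numbers, β > 0, and ε₁, …, εₙ i.i.d. Gumbel(0, β⁻¹). Then for each index i, the probability that sᵢ + εᵢ is the strict maximum of {sⱼ + εⱼ}ⱼ equals exp(β sᵢ)/∑ⱼ exp(β sⱼ). -/
open MeasureTheory Real Set Filter Topology
open scoped ENNReal

namespace GumbelTrickAux

noncomputable def gpdf (β K t : ℝ) : ℝ :=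
  β * Real.exp (-(β * t)) * Real.exp (-(K * Real.exp (-(β * t))))

noncomputable def gcdf (β K t : ℝ) : ℝ := K⁻¹ * Real.exp (-(K * Real.exp (-(β * t))))

lemma gpdf_nonneg {β : ℝ} (hβ : 0 < β) (K t : ℝ) : 0 ≤ gpdf β K t := by
  unfold gpdf; positivity

lemma continuous_gpdf (β K : ℝ) : Continuous (gpdf β K) := by
  unfold gpdf; fun_prop

lemma hasDerivAt_gcdf {β K : ℝ} (hK : K ≠ 0) (t : ℝ) :
    HasDerivAt (gcdf β K) (gpdf β K t) t := by
  have h1 : HasDerivAt (fun t : ℝ => -(β * t)) (-β) t := by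
    simpa using ((hasDerivAt_id t).const_mul β).fun_neg
  have h2 : HasDerivAt (fun t : ℝ => Real.exp (-(β * t)))
      (Real.exp (-(β * t)) * -β) t := h1.exp
  have h3 : HasDerivAt (fun t : ℝ => -(K * Real.exp (-(β * t))))
      (-(K * (Real.exp (-(β * t)) * -β))) t := (h2.const_mul K).neg
  have h4 := h3.exp.const_mul K⁻¹
  refine h4.congr_deriv ?_
  unfold gpdf
  field_simp

lemma tendsto_gcdf_atTop {β : ℝ} (hβ : 0 < β) (K : ℝ) :
    Tendsto (gcdf β K) atTop (𝓝 K⁻¹) := by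
  have h1 : Tendsto (fun t : ℝ => -(β * t)) atTop atBot := by
    exact tendsto_neg_atBot_iff.mpr (tendsto_id.const_mul_atTop hβ)
  have h2 : Tendsto (fun t : ℝ => Real.exp (-(β * t))) atTop (𝓝 0) :=
    Real.tendsto_exp_atBot.comp h1
  have h3 : Tendsto (fun t : ℝ => -(K * Real.exp (-(β * t)))) atTop (𝓝 0) := by
    simpa using (h2.const_mul K).neg
  have h4 : Tendsto (fun t : ℝ => Real.exp (-(K * Real.exp (-(β * t))))) atTop (𝓝 1) := by
    simpa [Function.comp_def] using (Real.continuous_exp.tendsto 0).comp h3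
  have := h4.const_mul K⁻¹
  unfold gcdf
  simpa using this

lemma tendsto_gcdf_atBot {β K : ℝ} (hβ : 0 < β) (hK : 0 < K) :
    Tendsto (gcdf β K) atBot (𝓝 0) := by
  have h1 : Tendsto (fun t : ℝ => -(β * t)) atBot atTop := by
    exact tendsto_neg_atTop_iff.mpr (tendsto_id.const_mul_atBot hβ)
  have h2 : Tendsto (fun t : ℝ => Real.exp (-(β * t))) atBot atTop :=
    Real.tendsto_exp_atTop.comp h1
  have h3 : Tendsto (fun t : ℝ => -(K * Real.exp (-(β * t)))) atBot atBot := by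
    exact tendsto_neg_atBot_iff.mpr (h2.const_mul_atTop hK)
  have h4 : Tendsto (fun t : ℝ => Real.exp (-(K * Real.exp (-(β * t))))) atBot (𝓝 0) :=
    Real.tendsto_exp_atBot.comp h3
  have := h4.const_mul K⁻¹
  unfold gcdf
  simpa using this

lemma gpdf_le {β K : ℝ} (hβ : 0 < β) (hK : 0 < K) (t : ℝ) :
    gpdf β K t ≤ β * (2 / K) ^ 2 * Real.exp (β * t) := by
  set x : ℝ := Real.exp (-(β * t)) with hx
  have hx0 : 0 < x := Real.exp_pos _
  set y : ℝ := K * x / 2 with hy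
  have hy0 : 0 < y := by positivity
  have hyle : y ≤ Real.exp y := by
    have := Real.add_one_le_exp y; linarith
  have key : x * Real.exp (-y) ≤ 2 / K := by
    have h1 : y * Real.exp (-y) ≤ 1 := by
      have := mul_le_mul_of_nonneg_right hyle (Real.exp_pos (-y)).le
      rwa [← Real.exp_add, add_neg_cancel, Real.exp_zero] at this
    have hx' : x = (2 / K) * y := by field_simp [hy]; ring
    rw [hx', mul_assoc]
    calc (2 / K) * (y * Real.exp (-y)) ≤ (2 / K) * 1 := by
          apply mul_le_mul_of_nonneg_left h1; positivity
      _ = 2 / K := mul_one _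
  have hsq : (x * Real.exp (-y)) ^ 2 ≤ (2 / K) ^ 2 := by
    apply pow_le_pow_left₀ (by positivity) key
  have hrw : gpdf β K t = β * ((x * Real.exp (-y)) ^ 2) * Real.exp (β * t) := by
    unfold gpdf
    rw [hy, hx, mul_pow]
    simp only [pow_two, ← Real.exp_add, mul_assoc]
    congr 1
    ring
  calc gpdf β K t = β * ((x * Real.exp (-y)) ^ 2) * Real.exp (β * t) := hrw
    _ ≤ β * (2 / K) ^ 2 * Real.exp (β * t) := by
        apply mul_le_mul_of_nonneg_right _ (Real.exp_pos _).le
        exact mul_le_mul_of_nonneg_left hsq hβ.le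

lemma integrableOn_Iic_gpdf {β K : ℝ} (hβ : 0 < β) (hK : 0 < K) (a : ℝ) :
    IntegrableOn (gpdf β K) (Iic a) := by
  have h1 : Integrable ((Iic (β * a)).indicator Real.exp) volume :=
    (integrable_indicator_iff measurableSet_Iic).2 (integrableOn_exp_Iic (β * a))
  have h2 := h1.comp_mul_left' hβ.ne'
  have h3 : (fun t => (Iic (β * a)).indicator Real.exp (β * t))
      = (Iic a).indicator (fun t => Real.exp (β * t)) := by
    ext t
    by_cases h : t ≤ a
    · rw [Set.indicator_of_mem (mem_Iic.2 ((mul_le_mul_iff_right₀ hβ).2 h)),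
        Set.indicator_of_mem (mem_Iic.2 h)]
    · rw [Set.indicator_of_notMem (fun hc => h ((mul_le_mul_iff_right₀ hβ).1 (mem_Iic.1 hc))),
        Set.indicator_of_notMem (fun hc => h (mem_Iic.1 hc))]
  rw [h3] at h2
  have h4 : IntegrableOn (fun t => Real.exp (β * t)) (Iic a) :=
    (integrable_indicator_iff measurableSet_Iic).1 h2
  refine Integrable.mono' (h4.const_mul (β * (2 / K) ^ 2))
    ((continuous_gpdf β K).aestronglyMeasurable.restrict) ?_
  refine Filter.Eventually.of_forall fun t => ?_
  rw [Real.norm_of_nonneg (gpdf_nonneg hβ K t)]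
  exact gpdf_le hβ hK t

lemma integrable_gpdf {β K : ℝ} (hβ : 0 < β) (hK : 0 < K) :
    Integrable (gpdf β K) := by
  rw [← integrableOn_univ, ← Set.Iic_union_Ioi (a := (0:ℝ))]
  refine (integrableOn_Iic_gpdf hβ hK 0).union ?_
  exact integrableOn_Ioi_deriv_of_nonneg' (fun x _ => hasDerivAt_gcdf hK.ne' x)
    (fun x _ => gpdf_nonneg hβ K x) (tendsto_gcdf_atTop hβ K)

lemma integral_Iic_gpdf {β K : ℝ} (hβ : 0 < β) (hK : 0 < K) (a : ℝ) :
    ∫ t in Iic a, gpdf β K t = K⁻¹ * Real.exp (-(K * Real.exp (-(β * a)))) := by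
  have := integral_Iic_of_hasDerivAt_of_tendsto' (fun x _ => hasDerivAt_gcdf hK.ne' x)
    (integrableOn_Iic_gpdf hβ hK a) (tendsto_gcdf_atBot hβ hK)
  simpa [gcdf] using this

lemma integral_gpdf {β K : ℝ} (hβ : 0 < β) (hK : 0 < K) :
    ∫ t, gpdf β K t = K⁻¹ := by
  have := integral_of_hasDerivAt_of_tendsto (fun x => hasDerivAt_gcdf hK.ne' x)
    (integrable_gpdf hβ hK) (tendsto_gcdf_atBot hβ hK) (tendsto_gcdf_atTop hβ K)
  simpa using this

noncomputable def gmeasure (β : ℝ) : Measure ℝ :=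
  volume.withDensity (fun t => ENNReal.ofReal (gpdf β 1 t))

lemma gmeasure_Iic {β : ℝ} (hβ : 0 < β) (a : ℝ) :
    gmeasure β (Iic a) = ENNReal.ofReal (Real.exp (-Real.exp (-(β * a)))) := by
  rw [gmeasure, withDensity_apply _ measurableSet_Iic,
    ← ofReal_integral_eq_lintegral_ofReal (integrableOn_Iic_gpdf hβ one_pos a)
      (Filter.Eventually.of_forall fun t => gpdf_nonneg hβ 1 t),
    integral_Iic_gpdf hβ one_pos a]
  norm_num

theorem gmeasure_prob {β : ℝ} (hβ : 0 < β) : IsProbabilityMeasure (gmeasure β) := by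
  constructor
  rw [gmeasure, withDensity_apply _ MeasurableSet.univ, Measure.restrict_univ,
    ← ofReal_integral_eq_lintegral_ofReal (integrable_gpdf hβ one_pos)
      (Filter.Eventually.of_forall fun t => gpdf_nonneg hβ 1 t),
    integral_gpdf hβ one_pos]
  norm_num

lemma gmeasure_Iio {β : ℝ} (hβ : 0 < β) (a : ℝ) :
    gmeasure β (Iio a) = ENNReal.ofReal (Real.exp (-Real.exp (-(β * a)))) := by
  have h0 : gmeasure β {a} = 0 :=
    (withDensity_absolutelyContinuous volume _) (measure_singleton a)
  have h1 : gmeasure β (Iio a) = gmeasure β (Iic a) := by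
    refine le_antisymm (measure_mono Iio_subset_Iic_self) ?_
    rw [← Set.Iio_union_right]
    exact (measure_union_le _ _).trans (by simp [h0])
  rw [h1, gmeasure_Iic hβ]

end GumbelTrickAux

theorem gumbel_max_trick_coldness {Ω : Type*} [MeasurableSpace Ω] (P : Measure Ω)
    [IsProbabilityMeasure P] (n : ℕ) (s : Fin n → ℝ) (β : ℝ) (hβ : 0 < β)
    (ε : Fin n → Ω → ℝ) (hmeas : ∀ i, Measurable (ε i))
    (hindep : ProbabilityTheory.iIndepFun ε P)
    (hgumbel : ∀ i, IsGumbel P (ε i) 0 β⁻¹) (i : Fin n) :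
    P {ω | ∀ j, j ≠ i → s j + ε j ω < s i + ε i ω} =
      ENNReal.ofReal (Real.exp (β * s i) / ∑ j, Real.exp (β * s j)) := by
  classical
  obtain ⟨m, rfl⟩ : ∃ m, n = m + 1 := ⟨n - 1, (Nat.succ_pred_eq_of_pos i.pos).symm⟩
  set ν : Measure ℝ := GumbelTrickAux.gmeasure β with hν
  haveI hprob : IsProbabilityMeasure ν := GumbelTrickAux.gmeasure_prob hβ
  -- each ε j has law ν
  have hlaw : ∀ j, P.map (ε j) = ν := by
    intro j
    haveI : IsProbabilityMeasure (P.map (ε j)) :=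
      Measure.isProbabilityMeasure_map (hmeas j).aemeasurable
    refine Measure.ext_of_Iic (P.map (ε j)) ν fun a => ?_
    rw [Measure.map_apply (hmeas j) measurableSet_Iic]
    have h1 : ε j ⁻¹' (Set.Iic a) = {ω | ε j ω ≤ a} := rfl
    have h2 : -(a - 0) / β⁻¹ = -(β * a) := by field_simp; ring
    rw [h1, hgumbel j a, h2, hν, GumbelTrickAux.gmeasure_Iic hβ]
  -- joint law
  set Φ : Ω → (Fin (m + 1) → ℝ) := fun ω j => ε j ω with hΦ
  have hΦm : Measurable Φ := measurable_pi_lambda _ fun j => hmeas j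
  have hjoint : Measure.pi (fun _ : Fin (m + 1) => ν) = P.map Φ := by
    refine Measure.pi_eq fun t ht => ?_
    rw [Measure.map_apply hΦm (MeasurableSet.univ_pi ht)]
    have h1 : Φ ⁻¹' Set.pi Set.univ t = ⋂ j ∈ Finset.univ, ε j ⁻¹' t j := by
      ext ω; simp [Φ, Set.mem_pi]
    rw [h1, hindep.measure_inter_preimage_eq_mul Finset.univ (fun j _ => ht j)]
    refine Finset.prod_congr rfl fun j _ => ?_
    rw [← hlaw j, Measure.map_apply (hmeas j) (ht j)]
  -- the event as a set in the product space
  set T : Set (Fin (m + 1) → ℝ) := {x | ∀ j, j ≠ i → s j + x j < s i + x i} with hT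
  have hTm : MeasurableSet T := by
    have h1 : T = ⋂ j, {x : Fin (m + 1) → ℝ | j ≠ i → s j + x j < s i + x i} := by
      ext x; simp [hT]
    rw [h1]
    refine MeasurableSet.iInter fun j => ?_
    by_cases h : j = i
    · simp [h]
    · have h2 : {x : Fin (m + 1) → ℝ | j ≠ i → s j + x j < s i + x i}
          = {x | s j + x j < s i + x i} := by ext x; simp [h]
      rw [h2]
      exact measurableSet_lt (measurable_const.add (measurable_pi_apply j))
        (measurable_const.add (measurable_pi_apply i))
  have hPT : P {ω | ∀ j, j ≠ i → s j + ε j ω < s i + ε i ω}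
      = Measure.pi (fun _ : Fin (m + 1) => ν) T := by
    rw [hjoint, Measure.map_apply hΦm hTm]
    rfl
  -- split off coordinate i
  set V : Set (ℝ × (Fin m → ℝ)) :=
    {q | ∀ j : Fin m, s (i.succAbove j) + q.2 j < s i + q.1} with hV
  have hVm : MeasurableSet V := by
    have h1 : V = ⋂ j : Fin m,
        {q : ℝ × (Fin m → ℝ) | s (i.succAbove j) + q.2 j < s i + q.1} := by
      ext q; simp [hV]
    rw [h1]
    refine MeasurableSet.iInter fun j => ?_
    exact measurableSet_lt (by fun_prop) (by fun_prop)
  have hTV : T = (MeasurableEquiv.piFinSuccAbove (fun _ : Fin (m + 1) => ℝ) i) ⁻¹' V := by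
    ext x
    simp only [hT, hV, MeasurableEquiv.piFinSuccAbove, Set.mem_setOf_eq, Set.mem_preimage]
    constructor
    · intro hx j
      exact hx (i.succAbove j) (Fin.succAbove_ne i j)
    · intro hx j hj
      obtain ⟨k, rfl⟩ := Fin.exists_succAbove_eq hj
      exact hx k
  have hmp := MeasureTheory.measurePreserving_piFinSuccAbove (fun _ : Fin (m + 1) => ν) i
  -- the inner function
  set F : ℝ → ℝ := fun a => Real.exp (-Real.exp (-(β * a))) with hF
  set G : ℝ → ℝ≥0∞ := fun t =>
    ENNReal.ofReal (∏ j : Fin m, F (s i + t - s (i.succAbove j))) with hG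
  have hGm : Measurable G := by
    refine ENNReal.measurable_ofReal.comp (Continuous.measurable ?_)
    refine continuous_finset_prod _ fun j _ => ?_
    simp only [hF]
    fun_prop
  have hGval : ∀ y : ℝ × (Fin m → ℝ),
      (Measure.pi fun _ : Fin m => ν) (Prod.mk y.1 ⁻¹' V) = G y.1 := by
    intro y
    have h1 : Prod.mk y.1 ⁻¹' V
        = Set.pi Set.univ (fun j : Fin m => Set.Iio (s i + y.1 - s (i.succAbove j))) := by
      ext z
      simp [hV, Set.mem_pi, lt_sub_iff_add_lt']
    rw [h1, Measure.pi_pi]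
    rw [Finset.prod_congr rfl fun j _ => GumbelTrickAux.gmeasure_Iio hβ _]
    simp only [hG, hF]
    exact (ENNReal.ofReal_prod_of_nonneg fun j _ => (Real.exp_pos _).le).symm
  -- main computation
  rw [hPT, hTV, hmp.measure_preimage hVm.nullMeasurableSet, Measure.prod_apply hVm]
  have h3 : ∀ t : ℝ, ((Measure.pi fun _ : Fin m => ν) (Prod.mk t ⁻¹' V)) = G t := by
    intro t; exact hGval (t, fun _ => 0)
  rw [lintegral_congr fun t => h3 t]
  set K : ℝ := ∑ j : Fin (m + 1), Real.exp (β * (s j - s i)) with hK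
  have hKpos : 0 < K := Finset.sum_pos (fun j _ => Real.exp_pos _) ⟨i, Finset.mem_univ i⟩
  have hsum : ∑ j : Fin m, Real.exp (β * (s (i.succAbove j) - s i)) = K - 1 := by
    have h4 := Fin.sum_univ_succAbove (fun j => Real.exp (β * (s j - s i))) i
    rw [hK, h4]
    simp
  have hpoint : ∀ t : ℝ, ENNReal.ofReal (GumbelTrickAux.gpdf β 1 t) * G t
      = ENNReal.ofReal (GumbelTrickAux.gpdf β K t) := by
    intro t
    rw [hG, ← ENNReal.ofReal_mul (GumbelTrickAux.gpdf_nonneg hβ 1 t)]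
    congr 1
    simp only [hF]
    rw [← Real.exp_sum]
    unfold GumbelTrickAux.gpdf
    rw [mul_assoc, ← Real.exp_add]
    congr 1
    have h4 : ∀ j : Fin m, -(Real.exp (-(β * (s i + t - s (i.succAbove j)))))
        = -(Real.exp (-(β * t)) * Real.exp (β * (s (i.succAbove j) - s i))) := by
      intro j
      rw [← Real.exp_add]
      congr 1
      ring
    simp only [h4]
    rw [Finset.sum_neg_distrib, ← Finset.mul_sum, hsum]
    ring
  have hdm : Measurable fun t : ℝ => ENNReal.ofReal (GumbelTrickAux.gpdf β 1 t) :=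
    ENNReal.measurable_ofReal.comp (GumbelTrickAux.continuous_gpdf β 1).measurable
  rw [hν, GumbelTrickAux.gmeasure, lintegral_withDensity_eq_lintegral_mul volume hdm hGm]
  simp only [Pi.mul_apply]
  rw [lintegral_congr hpoint,
    ← ofReal_integral_eq_lintegral_ofReal (GumbelTrickAux.integrable_gpdf hβ hKpos)
      (Filter.Eventually.of_forall (GumbelTrickAux.gpdf_nonneg hβ K)),
    GumbelTrickAux.integral_gpdf hβ hKpos]
  congr 1
  have h5 : K = (∑ j, Real.exp (β * s j)) / Real.exp (β * s i) := by
    rw [hK, Finset.sum_div]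
    exact Finset.sum_congr rfl fun j _ => by rw [mul_sub, Real.exp_sub]
  rw [h5, inv_div]
end

section
/- Let s₁, …, sₙ be real numbers, β > 0, and ε₁, …, εₙ i.i.d. Gumbel(0, β⁻¹). Then the (ordered) set of indices of the top-k values of {sᵢ + εᵢ} has the same distribution as an ordered sample without replacement of size k from the categorical distribution Categorical(exp(β sᵢ)/∑ⱼ exp(β sⱼ)). -/
open MeasureTheory

/-- `ι : Fin k → Fin n` lists the indices of the `k` largest values of `v`
in decreasing order. -/
def IsArgTopK {n k : ℕ} (v : Fin n → ℝ) (ι : Fin k → Fin n) : Prop :=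
  Function.Injective ι ∧
  (∀ j₁ j₂ : Fin k, j₁ < j₂ → v (ι j₂) < v (ι j₁)) ∧
  (∀ m : Fin n, m ∉ Set.range ι → ∀ j : Fin k, v m < v (ι j))

/-- Probability that an ordered sample without replacement of size `k` from the
categorical distribution with weights `w` equals the ordered list `ι`. -/
noncomputable def orderedSampleWithoutReplacementProb {n k : ℕ} (w : Fin n → ℝ)
    (ι : Fin k → Fin n) : ℝ :=
  ∏ j : Fin k,
    w (ι j) /
      ∑ ℓ ∈ Finset.univ \ (Finset.univ.filter (fun j' : Fin k => j' < j)).image ι, w ℓ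

namespace GTK

open ProbabilityTheory Real Set

/-- The "exponential race" event: all coordinates exceed `u`, the coordinates selected
by `ι` are increasing, and every unselected coordinate exceeds every selected one. -/
def Ev {n k : ℕ} (ι : Fin k → Fin n) (u : ℝ) : Set (Fin n → ℝ) :=
  {t | (∀ m, u < t m) ∧ (∀ j₁ j₂ : Fin k, j₁ < j₂ → t (ι j₁) < t (ι j₂)) ∧
    (∀ m : Fin n, m ∉ Set.range ι → ∀ j : Fin k, t (ι j) < t m)}

lemma measurable_Ev {n k : ℕ} (ι : Fin k → Fin n) (u : ℝ) : MeasurableSet (Ev ι u) := by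
  have hrw : Ev ι u = (⋂ m, {t : Fin n → ℝ | u < t m}) ∩
      ((⋂ j₁, ⋂ j₂, {t : Fin n → ℝ | j₁ < j₂ → t (ι j₁) < t (ι j₂)}) ∩
        (⋂ m, ⋂ j, {t : Fin n → ℝ | m ∉ Set.range ι → t (ι j) < t m})) := by
    ext t
    simp only [Ev, mem_inter_iff, mem_iInter, mem_setOf_eq]
    exact ⟨fun ⟨a, b, c⟩ => ⟨a, b, fun m j hm => c m hm j⟩,
      fun ⟨a, b, c⟩ => ⟨a, b, fun m hm j => c m j hm⟩⟩
  rw [hrw]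
  refine MeasurableSet.inter (MeasurableSet.iInter fun m =>
      measurableSet_lt measurable_const (measurable_pi_apply m)) (MeasurableSet.inter ?_ ?_)
  · refine MeasurableSet.iInter fun j₁ => MeasurableSet.iInter fun j₂ => ?_
    by_cases h : j₁ < j₂
    · have : {t : Fin n → ℝ | j₁ < j₂ → t (ι j₁) < t (ι j₂)} =
          {t : Fin n → ℝ | t (ι j₁) < t (ι j₂)} := by ext t; simp [h]
      rw [this]
      exact measurableSet_lt (measurable_pi_apply _) (measurable_pi_apply _)
    · have : {t : Fin n → ℝ | j₁ < j₂ → t (ι j₁) < t (ι j₂)} = univ :=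
        eq_univ_of_forall fun t hm => absurd hm h
      rw [this]
      exact MeasurableSet.univ
  · refine MeasurableSet.iInter fun m => MeasurableSet.iInter fun j => ?_
    by_cases h : m ∉ Set.range ι
    · have : {t : Fin n → ℝ | m ∉ Set.range ι → t (ι j) < t m} =
          {t : Fin n → ℝ | t (ι j) < t m} := by ext t; simp [h]
      rw [this]
      exact measurableSet_lt (measurable_pi_apply _) (measurable_pi_apply _)
    · have : {t : Fin n → ℝ | m ∉ Set.range ι → t (ι j) < t m} = univ :=
        eq_univ_of_forall fun t hm => absurd hm h
      rw [this]
      exact MeasurableSet.univ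

lemma lint_exp_aux (b u c : ℝ) (hb : 0 < b) (hc : 0 ≤ c) :
    ∫⁻ x in Ioi u, ENNReal.ofReal (c * exp (-(b*x))) = ENNReal.ofReal (c * exp (-(b*u)) / b) := by
  simp only [neg_mul_eq_neg_mul]
  rw [← ofReal_integral_eq_lintegral_ofReal (((exp_neg_integrableOn_Ioi u hb).const_mul c))
    (Filter.Eventually.of_forall fun x => by positivity)]
  congr 1
  rw [MeasureTheory.integral_const_mul]
  have h2 : ∫ x in Ioi u, exp (-b * x) = b⁻¹ • ∫ x in Ioi (b*u), exp (-x) := by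
    have := integral_comp_mul_left_Ioi (fun y => exp (-y)) u hb
    simpa [neg_mul] using this
  rw [h2, integral_exp_neg_Ioi]
  simp only [smul_eq_mul]
  ring

lemma expMeasure_Iic (r x : ℝ) (hr : 0 < r) :
    (expMeasure r) (Iic x) = ENNReal.ofReal (if 0 ≤ x then 1 - exp (-(r*x)) else 0) := by
  rw [show expMeasure r = volume.withDensity (exponentialPDF r) from rfl,
    withDensity_apply _ measurableSet_Iic]
  exact lintegral_exponentialPDF_eq_antiDeriv hr x

lemma expMeasure_Iic_zero (r : ℝ) (hr : 0 < r) : (expMeasure r) (Iic 0) = 0 := by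
  rw [expMeasure_Iic r 0 hr]; simp

lemma expMeasure_Ioi (r a : ℝ) (hr : 0 < r) (ha : 0 ≤ a) :
    (expMeasure r) (Ioi a) = ENNReal.ofReal (exp (-(r*a))) := by
  have hp : IsProbabilityMeasure (expMeasure r) := isProbabilityMeasure_expMeasure hr
  have hIic : (expMeasure r) (Iic a) = ENNReal.ofReal (1 - exp (-(r*a))) := by
    rw [expMeasure_Iic r a hr, if_pos ha]
  have h0 := measure_add_measure_compl (μ := expMeasure r) (measurableSet_Iic (a := a))
  rw [compl_Iic, measure_univ, hIic] at h0
  have h1 : (expMeasure r) (Ioi a) = 1 - ENNReal.ofReal (1 - exp (-(r*a))) :=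
    ENNReal.eq_sub_of_add_eq (by simp) (by rw [add_comm]; exact h0)
  rw [h1]
  refine ENNReal.sub_eq_of_eq_add (by simp) ?_
  rw [← ENNReal.ofReal_add (exp_pos _).le (by
      simp only [sub_nonneg, exp_le_one_iff, Left.neg_nonpos_iff]; positivity),
    show exp (-(r*a)) + (1 - exp (-(r*a))) = 1 by ring, ENNReal.ofReal_one]

lemma expMeasure_singleton (r a : ℝ) : (expMeasure r) {a} = 0 := by
  rw [show expMeasure r = volume.withDensity (exponentialPDF r) from rfl,
    withDensity_apply _ (measurableSet_singleton a)]
  exact setLIntegral_measure_zero _ _ (measure_singleton a)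

lemma expMeasure_Ici (r a : ℝ) (hr : 0 < r) (ha : 0 ≤ a) :
    (expMeasure r) (Ici a) = ENNReal.ofReal (exp (-(r*a))) := by
  rw [← expMeasure_Ioi r a hr ha]
  refine le_antisymm ?_ (measure_mono Ioi_subset_Ici_self)
  rw [show Ici a = {a} ∪ Ioi a by ext x; simp [le_iff_lt_or_eq, eq_comm]]
  exact (measure_union_le _ _).trans (by simp [expMeasure_singleton r a])

lemma step_iff {n' k : ℕ} (ι : Fin (k+1) → Fin (n'+1)) (hι : Function.Injective ι)
    (ι' : Fin k → Fin n') (hspec : ∀ j, (ι 0).succAbove (ι' j) = ι j.succ) (u x : ℝ)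
    (y : Fin n' → ℝ) :
    (Fin.insertNth (α := fun _ => ℝ) (ι 0) x y ∈ Ev ι u) ↔ (u < x ∧ y ∈ Ev ι' x) := by
  set i₀ := ι 0 with hi₀
  set t : Fin (n'+1) → ℝ := Fin.insertNth (α := fun _ => ℝ) i₀ x y with ht
  have ht0 : t i₀ = x := by simp [ht]
  have hts : ∀ m', t (i₀.succAbove m') = y m' := fun m' => by simp [ht]
  constructor
  · rintro ⟨h1, h2, h3⟩
    have hux : u < x := ht0 ▸ h1 i₀
    refine ⟨hux, fun m' => ?_, fun j₁ j₂ hlt => ?_, fun m' hm' j => ?_⟩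
    · by_cases hm : i₀.succAbove m' ∈ Set.range ι
      · obtain ⟨j, hj⟩ := hm
        have hj0 : j ≠ 0 := by
          rintro rfl
          exact Fin.succAbove_ne i₀ m' hj.symm
        obtain ⟨j', rfl⟩ := Fin.eq_succ_of_ne_zero hj0
        have := h2 0 j'.succ (Fin.succ_pos j')
        rwa [← hi₀, ht0, hj, hts] at this
      · have := h3 _ hm 0
        rwa [← hi₀, ht0, hts] at this
    · have := h2 j₁.succ j₂.succ (Fin.succ_lt_succ_iff.2 hlt)
      rwa [← hspec j₁, ← hspec j₂, hts, hts] at this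
    · have hmm : i₀.succAbove m' ∉ Set.range ι := by
        rintro ⟨j₀, hj₀⟩
        have hj0 : j₀ ≠ 0 := by
          rintro rfl
          exact Fin.succAbove_ne i₀ m' hj₀.symm
        obtain ⟨j₁, rfl⟩ := Fin.eq_succ_of_ne_zero hj0
        exact hm' ⟨j₁, Fin.succAbove_right_injective (p := i₀) (by rw [hspec j₁, hj₀])⟩
      have := h3 _ hmm j.succ
      rwa [← hspec j, hts, hts] at this
  · rintro ⟨hux, ha, hb, hc⟩
    refine ⟨fun m => ?_, fun j₁ j₂ hlt => ?_, fun m hm j => ?_⟩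
    · by_cases hm : m = i₀
      · rw [hm, ht0]; exact hux
      · obtain ⟨m', rfl⟩ := Fin.exists_succAbove_eq hm
        rw [hts]
        exact hux.trans (ha m')
    · rcases Fin.eq_zero_or_eq_succ j₁ with rfl | ⟨j₁', rfl⟩
      · have hj2 : j₂ ≠ 0 := Fin.pos_iff_ne_zero.1 hlt
        obtain ⟨j₂', rfl⟩ := Fin.eq_succ_of_ne_zero hj2
        rw [← hi₀, ht0, ← hspec j₂', hts]
        exact ha (ι' j₂')
      · rcases Fin.eq_zero_or_eq_succ j₂ with rfl | ⟨j₂', rfl⟩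
        · exact absurd hlt (Fin.not_lt_zero _)
        · have := hb j₁' j₂' (Fin.succ_lt_succ_iff.1 hlt)
          rwa [← hts (ι' j₁'), ← hts (ι' j₂'), hspec j₁', hspec j₂'] at this
    · have hmne : m ≠ i₀ := fun h => hm ⟨0, h.symm⟩
      obtain ⟨m', rfl⟩ := Fin.exists_succAbove_eq hmne
      have hm'r : m' ∉ Set.range ι' := by
        rintro ⟨j₁, hj₁⟩
        exact hm ⟨j₁.succ, by rw [← hspec j₁, hj₁]⟩
      rcases Fin.eq_zero_or_eq_succ j with rfl | ⟨j', rfl⟩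
      · rw [← hi₀, ht0, hts]
        exact ha m'
      · rw [← hspec j', hts, hts]
        exact hc m' hm'r j'

lemma denom_eq {n' k : ℕ} (w : Fin (n'+1) → ℝ) (ι : Fin (k+1) → Fin (n'+1))
    (hι : Function.Injective ι) (ι' : Fin k → Fin n')
    (hspec : ∀ j, (ι 0).succAbove (ι' j) = ι j.succ) (j : Fin k) :
    ∑ ℓ ∈ Finset.univ \ (Finset.univ.filter (fun j' : Fin (k+1) => j' < j.succ)).image ι, w ℓ =
      ∑ ℓ' ∈ Finset.univ \ (Finset.univ.filter (fun j' : Fin k => j' < j)).image ι',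
        w ((ι 0).succAbove ℓ') := by
  set i₀ := ι 0 with hi₀
  have hset : Finset.univ \ (Finset.univ.filter (fun j' : Fin (k+1) => j' < j.succ)).image ι =
      (Finset.univ \ (Finset.univ.filter (fun j' : Fin k => j' < j)).image ι').image
        i₀.succAbove := by
    ext ℓ
    simp only [Finset.mem_sdiff, Finset.mem_image, Finset.mem_filter, Finset.mem_univ,
      true_and, not_exists, not_and]
    constructor
    · intro h
      have hℓ : ℓ ≠ i₀ := by
        rintro rfl
        exact h 0 (Fin.succ_pos j) hi₀.symm
      obtain ⟨ℓ', rfl⟩ := Fin.exists_succAbove_eq hℓ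
      refine ⟨ℓ', fun j'' hj'' hj''eq => ?_, rfl⟩
      exact h j''.succ (Fin.succ_lt_succ_iff.2 hj'') (by rw [← hspec j'', hj''eq])
    · rintro ⟨ℓ', hℓ', rfl⟩ j' hj' heq
      have hj0 : j' ≠ 0 := by
        rintro rfl
        exact Fin.succAbove_ne i₀ ℓ' (by rw [← heq, hi₀])
      obtain ⟨j₁, rfl⟩ := Fin.eq_succ_of_ne_zero hj0
      refine hℓ' j₁ (Fin.succ_lt_succ_iff.1 hj') ?_
      exact Fin.succAbove_right_injective (p := i₀) (by rw [hspec j₁, heq])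
  rw [hset, Finset.sum_image (fun a _ b _ h => Fin.succAbove_right_injective h)]

/-- The key computation: probability of the exponential race event. -/
lemma key : ∀ (k n : ℕ) (w : Fin n → ℝ), (∀ i, 0 < w i) → ∀ ι : Fin k → Fin n,
    Function.Injective ι → ∀ u : ℝ, 0 ≤ u →
    Measure.pi (fun i => expMeasure (w i)) (Ev ι u) =
      ENNReal.ofReal (Real.exp (-((∑ i, w i) * u)) *
        ∏ j : Fin k, w (ι j) /
          ∑ ℓ ∈ Finset.univ \ (Finset.univ.filter (fun j' : Fin k => j' < j)).image ι, w ℓ) := by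
  intro k
  induction k with
  | zero =>
    intro n w hw ι hι u hu
    haveI : ∀ i, IsProbabilityMeasure (expMeasure (w i)) :=
      fun i => isProbabilityMeasure_expMeasure (hw i)
    have hEv : Ev ι u = Set.pi univ fun _ : Fin n => Ioi u := by
      ext t
      simp [Ev]
    rw [hEv, Measure.pi_pi]
    have hIoi : ∀ i : Fin n, expMeasure (w i) (Ioi u) = ENNReal.ofReal (exp (-(w i * u))) :=
      fun i => expMeasure_Ioi _ _ (hw i) hu
    rw [Finset.prod_congr rfl fun i _ => hIoi i,
      ← ENNReal.ofReal_prod_of_nonneg (fun i _ => (exp_pos _).le)]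
    congr 1
    rw [show ∏ j : Fin 0, (w (ι j) /
        ∑ ℓ ∈ Finset.univ \ (Finset.univ.filter (fun j' : Fin 0 => j' < j)).image ι, w ℓ) = 1
      from Finset.prod_of_isEmpty _, mul_one, ← Real.exp_sum]
    congr 1
    rw [Finset.sum_mul, ← Finset.sum_neg_distrib]
  | succ k ih =>
    intro n w hw ι hι u hu
    cases n with
    | zero => exact (ι 0).elim0
    | succ n' =>
      haveI : ∀ i : Fin (n'+1), IsProbabilityMeasure (expMeasure (w i)) :=
        fun i => isProbabilityMeasure_expMeasure (hw i)
      set i₀ := ι 0 with hi₀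
      have hne : ∀ j : Fin k, ι j.succ ≠ i₀ := fun j h => Fin.succ_ne_zero j (hι h)
      choose ι' hspec using fun j : Fin k => Fin.exists_succAbove_eq (hne j)
      have hι'inj : Function.Injective ι' := fun a b hab => by
        have : ι a.succ = ι b.succ := by rw [← hspec a, ← hspec b, hab]
        exact Fin.succ_injective _ (hι this)
      set w' : Fin n' → ℝ := fun m => w (i₀.succAbove m) with hw'def
      have hw' : ∀ m, 0 < w' m := fun m => hw _
      set W' : ℝ := ∑ m, w' m with hW'
      set C' : ℝ := ∏ j : Fin k, w' (ι' j) /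
        ∑ ℓ ∈ Finset.univ \ (Finset.univ.filter (fun j' : Fin k => j' < j)).image ι', w' ℓ
        with hC'
      have hC'nonneg : 0 ≤ C' := Finset.prod_nonneg fun j _ => div_nonneg (hw' _).le
        (Finset.sum_nonneg fun ℓ _ => (hw' ℓ).le)
      have hW'pos : 0 ≤ W' := Finset.sum_nonneg fun m _ => (hw' m).le
      set e := MeasurableEquiv.piFinSuccAbove (fun _ : Fin (n'+1) => ℝ) i₀ with he
      have hMP := (measurePreserving_piFinSuccAbove (fun i => expMeasure (w i)) i₀).symm
      have hpre := hMP.measure_preimage (μa := (expMeasure (w i₀)).prod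
        (Measure.pi fun j => expMeasure (w (i₀.succAbove j))))
        (measurable_Ev ι u).nullMeasurableSet
      rw [← hpre]
      have hSmeas : MeasurableSet (e.symm ⁻¹' Ev ι u) :=
        e.symm.measurable (measurable_Ev ι u)
      rw [Measure.prod_apply hSmeas]
      have hslice : ∀ x : ℝ, (Measure.pi fun j => expMeasure (w (i₀.succAbove j)))
          (Prod.mk x ⁻¹' (e.symm ⁻¹' Ev ι u)) =
          Set.indicator (Ioi u) (fun x => ENNReal.ofReal (exp (-(W' * x)) * C')) x := by
        intro x
        by_cases hx : u < x
        · have hxset : Prod.mk x ⁻¹' (e.symm ⁻¹' Ev ι u) = Ev ι' x := by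
            ext y
            simp only [Set.mem_preimage]
            rw [show e.symm (x, y) = Fin.insertNth (α := fun _ => ℝ) i₀ x y from rfl]
            rw [step_iff ι hι ι' hspec u x y]
            simp [hx]
          rw [hxset, ih n' w' hw' ι' hι'inj x (hu.trans hx.le),
            Set.indicator_of_mem (show x ∈ Ioi u from hx)]
        · have hxset : Prod.mk x ⁻¹' (e.symm ⁻¹' Ev ι u) = ∅ := by
            ext y
            simp only [Set.mem_preimage, Set.mem_empty_iff_false, iff_false]
            rw [show e.symm (x, y) = Fin.insertNth (α := fun _ => ℝ) i₀ x y from rfl]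
            rw [step_iff ι hι ι' hspec u x y]
            exact fun h => hx h.1
          rw [hxset, Set.indicator_of_notMem (by simpa using hx)]
          simp
      rw [lintegral_congr hslice, lintegral_indicator measurableSet_Ioi]
      rw [show expMeasure (w i₀) = volume.withDensity (exponentialPDF (w i₀)) from rfl,
        restrict_withDensity measurableSet_Ioi,
        lintegral_withDensity_eq_lintegral_mul _
          (show Measurable (exponentialPDF (w i₀)) from
            (measurable_exponentialPDFReal (w i₀)).ennreal_ofReal)
          (show Measurable (fun x => ENNReal.ofReal (exp (-(W' * x)) * C')) from
            Measurable.ennreal_ofReal (by fun_prop))]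
      have hcong : ∀ x ∈ Ioi u,
          ((fun x => exponentialPDF (w i₀) x) * fun x => ENNReal.ofReal (exp (-(W' * x)) * C')) x
            = ENNReal.ofReal ((w i₀ * C') * exp (-((w i₀ + W') * x))) := by
        intro x hx
        have hx0 : (0:ℝ) ≤ x := hu.trans (le_of_lt hx)
        rw [Pi.mul_apply, exponentialPDF_of_nonneg hx0,
          ← ENNReal.ofReal_mul (mul_nonneg (hw i₀).le (exp_pos _).le)]
        congr 1
        rw [show -((w i₀ + W') * x) = -(w i₀ * x) + -(W' * x) by ring, Real.exp_add]
        ring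
      rw [setLIntegral_congr_fun_ae measurableSet_Ioi (Filter.Eventually.of_forall hcong)]
      rw [lint_exp_aux (w i₀ + W') u (w i₀ * C')
        (lt_of_lt_of_le (hw i₀) (le_add_of_nonneg_right hW'pos))
        (mul_nonneg (hw i₀).le hC'nonneg)]
      have hWsum : ∑ i, w i = w i₀ + W' := by
        rw [hW', Fin.sum_univ_succAbove w i₀]
      congr 1
      rw [Fin.prod_univ_succ]
      have hd0 : ∑ ℓ ∈ Finset.univ \ (Finset.univ.filter
          (fun j' : Fin (k+1) => j' < 0)).image ι, w ℓ = ∑ i, w i := by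
        congr 1
        simp
      have hdsucc : ∀ j : Fin k, w (ι j.succ) /
          (∑ ℓ ∈ Finset.univ \ (Finset.univ.filter
            (fun j' : Fin (k+1) => j' < j.succ)).image ι, w ℓ) =
          w' (ι' j) / ∑ ℓ ∈ Finset.univ \ (Finset.univ.filter
            (fun j' : Fin k => j' < j)).image ι', w' ℓ := by
        intro j
        rw [denom_eq w ι hι ι' hspec j, ← hspec j]
      rw [Finset.prod_congr rfl fun j _ => hdsucc j, hd0, hWsum, ← hi₀]
      ring

lemma law_eps {Ω : Type*} [MeasurableSpace Ω] (P : Measure Ω) [IsProbabilityMeasure P]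
    (β : ℝ) (hβ : 0 < β) (G : Ω → ℝ) (hG : Measurable G) (hgum : IsGumbel P G 0 β⁻¹) (c : ℝ) :
    Measure.map G P =
      Measure.map (fun t => -Real.log t / β - c) (expMeasure (Real.exp (β * c))) := by
  set r : ℝ := Real.exp (β * c) with hr
  have hrpos : 0 < r := exp_pos _
  haveI : IsProbabilityMeasure (expMeasure r) := isProbabilityMeasure_expMeasure hrpos
  have hgmeas : Measurable (fun t : ℝ => -Real.log t / β - c) :=
    (Real.measurable_log.neg.div_const β).sub_const c
  haveI : IsProbabilityMeasure (Measure.map G P) := Measure.isProbabilityMeasure_map hG.aemeasurable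
  refine Measure.ext_of_Iic _ _ fun a => ?_
  rw [Measure.map_apply hG measurableSet_Iic, Measure.map_apply hgmeas measurableSet_Iic]
  have hL : P (G ⁻¹' Iic a) = ENNReal.ofReal (Real.exp (-Real.exp (-(a - 0) / β⁻¹))) := hgum a
  rw [hL]
  set b : ℝ := Real.exp (-((a + c) * β)) with hb
  have hbpos : 0 < b := exp_pos _
  have hset : expMeasure r ((fun t => -Real.log t / β - c) ⁻¹' Iic a) = expMeasure r (Ici b) := by
    apply measure_congr
    rw [Filter.eventuallyEq_set]
    have hnull : ∀ᵐ t ∂(expMeasure r), t ∉ Iic (0:ℝ) := by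
      rw [ae_iff]
      refine measure_mono_null (fun t ht => ?_) (expMeasure_Iic_zero r hrpos)
      simpa using ht
    filter_upwards [hnull] with t ht
    have htpos : 0 < t := by simpa using ht
    simp only [mem_preimage, mem_Iic, mem_Ici]
    rw [sub_le_iff_le_add, div_le_iff₀ hβ, neg_le, Real.le_log_iff_exp_le htpos]
  rw [hset, expMeasure_Ici r b hrpos hbpos.le]
  congr 1
  rw [hb, hr, ← Real.exp_add]
  congr 1
  field_simp
  ring

lemma map_tuple_eq_pi {Ω : Type*} [MeasurableSpace Ω] (P : Measure Ω) [IsProbabilityMeasure P]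
    {n : ℕ} (ε : Fin n → Ω → ℝ) (hmeas : ∀ i, Measurable (ε i))
    (hindep : ProbabilityTheory.iIndepFun ε P) :
    Measure.map (fun ω i => ε i ω) P = Measure.pi (fun i => Measure.map (ε i) P) := by
  haveI : ∀ i, IsProbabilityMeasure (Measure.map (ε i) P) :=
    fun i => Measure.isProbabilityMeasure_map (hmeas i).aemeasurable
  refine (Measure.pi_eq fun sets hsets => ?_).symm
  rw [Measure.map_apply (measurable_pi_iff.2 hmeas) (MeasurableSet.univ_pi hsets)]
  have hpre : (fun ω (i : Fin n) => ε i ω) ⁻¹' (Set.pi univ sets) =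
      ⋂ i ∈ Finset.univ, ε i ⁻¹' sets i := by
    ext ω
    simp [Set.mem_pi]
  rw [hpre, hindep.measure_inter_preimage_eq_mul Finset.univ (fun i _ => hsets i)]
  exact Finset.prod_congr rfl fun i _ => (Measure.map_apply (hmeas i) (hsets i)).symm

lemma pi_map {n : ℕ} (νs : Fin n → Measure ℝ) [∀ i, IsProbabilityMeasure (νs i)]
    (g : Fin n → ℝ → ℝ) (hg : ∀ i, Measurable (g i)) :
    Measure.pi (fun i => Measure.map (g i) (νs i)) =
      Measure.map (fun (t : Fin n → ℝ) (i : Fin n) => g i (t i)) (Measure.pi νs) := by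
  haveI : ∀ i, IsProbabilityMeasure (Measure.map (g i) (νs i)) :=
    fun i => Measure.isProbabilityMeasure_map (hg i).aemeasurable
  refine Measure.pi_eq fun sets hsets => ?_
  rw [Measure.map_apply (show Measurable (fun (t : Fin n → ℝ) (i : Fin n) => g i (t i)) from
    measurable_pi_iff.2 fun i => (hg i).comp (measurable_pi_apply i))
    (MeasurableSet.univ_pi hsets)]
  have hpre : (fun (t : Fin n → ℝ) (i : Fin n) => g i (t i)) ⁻¹' (Set.pi univ sets) =
      Set.pi univ (fun i => g i ⁻¹' sets i) := by
    ext t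
    simp [Set.mem_pi]
  rw [hpre, Measure.pi_pi]
  exact Finset.prod_congr rfl fun i _ => (Measure.map_apply (hg i) (hsets i)).symm

lemma pi_pos_compl_null {n : ℕ} (w : Fin n → ℝ) (hw : ∀ i, 0 < w i) :
    (Measure.pi fun i => expMeasure (w i)) {t : Fin n → ℝ | ∀ i, 0 < t i}ᶜ = 0 := by
  haveI : ∀ i, IsProbabilityMeasure (expMeasure (w i)) :=
    fun i => isProbabilityMeasure_expMeasure (hw i)
  have hcompl : {t : Fin n → ℝ | ∀ i, 0 < t i}ᶜ = ⋃ i, {t : Fin n → ℝ | t i ≤ 0} := by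
    ext t
    simp [not_lt]
  rw [hcompl]
  refine measure_iUnion_null fun i => ?_
  have hset : {t : Fin n → ℝ | t i ≤ 0} =
      Set.pi univ (Function.update (fun _ : Fin n => (univ : Set ℝ)) i (Iic 0)) := by
    ext t
    simp only [mem_setOf_eq, Set.mem_pi, Set.mem_univ, forall_true_left]
    constructor
    · intro h j
      by_cases hj : j = i
      · subst hj; simp [Function.update_self, h]
      · simp [Function.update_of_ne hj]
    · intro h
      have := h i
      simpa [Function.update_self] using this
  rw [hset, Measure.pi_pi]
  refine Finset.prod_eq_zero (Finset.mem_univ i) ?_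
  simp [Function.update_self, expMeasure_Iic_zero (w i) (hw i)]

lemma measurable_argTopK {n k : ℕ} (s : Fin n → ℝ) (ι : Fin k → Fin n)
    (hι : Function.Injective ι) :
    MeasurableSet {x : Fin n → ℝ | IsArgTopK (fun i => s i + x i) ι} := by
  have hrw : {x : Fin n → ℝ | IsArgTopK (fun i => s i + x i) ι} =
      (⋂ j₁, ⋂ j₂, {x : Fin n → ℝ | j₁ < j₂ → s (ι j₂) + x (ι j₂) < s (ι j₁) + x (ι j₁)}) ∩
      (⋂ m, ⋂ j, {x : Fin n → ℝ | m ∉ Set.range ι → s m + x m < s (ι j) + x (ι j)}) := by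
    ext x
    simp only [IsArgTopK, mem_setOf_eq, mem_inter_iff, mem_iInter]
    constructor
    · rintro ⟨-, b, c⟩
      exact ⟨b, fun m j hm => c m hm j⟩
    · rintro ⟨b, c⟩
      exact ⟨hι, b, fun m hm j => c m j hm⟩
  rw [hrw]
  refine MeasurableSet.inter ?_ ?_
  · refine MeasurableSet.iInter fun j₁ => MeasurableSet.iInter fun j₂ => ?_
    by_cases h : j₁ < j₂
    · have : {x : Fin n → ℝ | j₁ < j₂ → s (ι j₂) + x (ι j₂) < s (ι j₁) + x (ι j₁)} =
          {x : Fin n → ℝ | s (ι j₂) + x (ι j₂) < s (ι j₁) + x (ι j₁)} := by ext x; simp [h]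
      rw [this]
      exact measurableSet_lt (measurable_const.add (measurable_pi_apply _))
        (measurable_const.add (measurable_pi_apply _))
    · have : {x : Fin n → ℝ | j₁ < j₂ → s (ι j₂) + x (ι j₂) < s (ι j₁) + x (ι j₁)} = univ :=
        eq_univ_of_forall fun x hm => absurd hm h
      rw [this]
      exact MeasurableSet.univ
  · refine MeasurableSet.iInter fun m => MeasurableSet.iInter fun j => ?_
    by_cases h : m ∉ Set.range ι
    · have : {x : Fin n → ℝ | m ∉ Set.range ι → s m + x m < s (ι j) + x (ι j)} =
          {x : Fin n → ℝ | s m + x m < s (ι j) + x (ι j)} := by ext x; simp [h]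
      rw [this]
      exact measurableSet_lt (measurable_const.add (measurable_pi_apply _))
        (measurable_const.add (measurable_pi_apply _))
    · have : {x : Fin n → ℝ | m ∉ Set.range ι → s m + x m < s (ι j) + x (ι j)} = univ :=
        eq_univ_of_forall fun x hm => absurd hm h
      rw [this]
      exact MeasurableSet.univ

end GTK

open GTK ProbabilityTheory Real Set in
theorem gumbel_top_k_coldness {Ω : Type*} [MeasurableSpace Ω] (P : Measure Ω)
    [IsProbabilityMeasure P] (n k : ℕ) (hk : k ≤ n) (s : Fin n → ℝ) (β : ℝ) (hβ : 0 < β)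
    (ε : Fin n → Ω → ℝ) (hmeas : ∀ i, Measurable (ε i))
    (hindep : ProbabilityTheory.iIndepFun ε P)
    (hgumbel : ∀ i, IsGumbel P (ε i) 0 β⁻¹)
    (ι : Fin k → Fin n) (hι : Function.Injective ι) :
    P {ω | IsArgTopK (fun i => s i + ε i ω) ι} =
      ENNReal.ofReal
        (orderedSampleWithoutReplacementProb (fun i => Real.exp (β * s i)) ι) := by
  classical
  set w : Fin n → ℝ := fun i => Real.exp (β * s i) with hwdef
  have hw : ∀ i, 0 < w i := fun i => exp_pos _
  haveI : ∀ i, IsProbabilityMeasure (expMeasure (w i)) :=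
    fun i => isProbabilityMeasure_expMeasure (hw i)
  set g : Fin n → ℝ → ℝ := fun i t => -Real.log t / β - s i with hgdef
  have hgmeas : ∀ i, Measurable (g i) :=
    fun i => (Real.measurable_log.neg.div_const β).sub_const (s i)
  set E : Set (Fin n → ℝ) := {x | IsArgTopK (fun i => s i + x i) ι} with hE
  have hEmeas : MeasurableSet E := measurable_argTopK s ι hι
  have h1 : {ω | IsArgTopK (fun i => s i + ε i ω) ι} = (fun ω (i : Fin n) => ε i ω) ⁻¹' E :=
    rfl
  rw [h1, ← Measure.map_apply (measurable_pi_iff.2 hmeas) hEmeas,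
    map_tuple_eq_pi P ε hmeas hindep,
    show (fun i => Measure.map (ε i) P) = fun i => Measure.map (g i) (expMeasure (w i)) from
      funext fun i => law_eps P β hβ (ε i) (hmeas i) (hgumbel i) (s i),
    pi_map (fun i => expMeasure (w i)) g hgmeas,
    Measure.map_apply (show Measurable (fun (t : Fin n → ℝ) (i : Fin n) => g i (t i)) from
      measurable_pi_iff.2 fun i => (hgmeas i).comp (measurable_pi_apply i)) hEmeas]
  have hnull := pi_pos_compl_null w hw
  have hcmp : ∀ a b : ℝ, 0 < a → 0 < b → (-log b / β < -log a / β ↔ a < b) := by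
    intro a b ha hb
    rw [div_lt_div_iff_of_pos_right hβ, neg_lt_neg_iff, log_lt_log_iff ha hb]
  have hinter : ((fun (t : Fin n → ℝ) (i : Fin n) => g i (t i)) ⁻¹' E) ∩
      {t : Fin n → ℝ | ∀ i, 0 < t i} = Ev ι 0 := by
    ext t
    simp only [mem_inter_iff, mem_preimage, hE, mem_setOf_eq, Ev]
    have hv : (fun i => s i + g i (t i)) = fun i => -Real.log (t i) / β :=
      funext fun i => by simp [hgdef]
    rw [hv]
    constructor
    · rintro ⟨⟨-, h2, h3⟩, hpos⟩
      exact ⟨hpos, fun j₁ j₂ hlt => (hcmp _ _ (hpos _) (hpos _)).1 (h2 j₁ j₂ hlt),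
        fun m hm j => (hcmp _ _ (hpos _) (hpos _)).1 (h3 m hm j)⟩
    · rintro ⟨hpos, h2, h3⟩
      exact ⟨⟨hι, fun j₁ j₂ hlt => (hcmp _ _ (hpos _) (hpos _)).2 (h2 j₁ j₂ hlt),
        fun m hm j => (hcmp _ _ (hpos _) (hpos _)).2 (h3 m hm j)⟩, hpos⟩
  rw [← measure_inter_conull hnull, hinter, key k n w hw ι hι 0 le_rfl]
  simp only [mul_zero, neg_zero, Real.exp_zero, one_mul]
  rfl
end

section
/- Let s₁, …, sₙ be strictly positive real numbers, β > 0, and ε₁, …, εₙ i.i.d. Gumbel(0, β⁻¹). Then the index maximizing log(sᵢ) + εᵢ is distributed according to the power distribution: P(argmax = i) = sᵢ^β / ∑ⱼ sⱼ^β. -/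
open MeasureTheory ProbabilityTheory Real Set Filter
open scoped ENNReal

namespace GumbelAux

lemma expMeasure_Iic (x : ℝ) :
    expMeasure 1 (Iic x) = ENNReal.ofReal (if 0 ≤ x then 1 - Real.exp (-x) else 0) := by
  haveI := isProbabilityMeasure_expMeasure (r := 1) one_pos
  rw [← ofReal_cdf (expMeasure 1) x]
  congr 1
  have := cdf_expMeasure_eq (r := 1) one_pos x
  simpa using this

lemma expMeasure_singleton (x : ℝ) : expMeasure 1 {x} = 0 := by
  rw [expMeasure, gammaMeasure, withDensity_apply _ (measurableSet_singleton x),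
    Measure.restrict_eq_zero.2 (by simp), lintegral_zero_measure]

lemma expMeasure_Ioi {x : ℝ} (hx : 0 ≤ x) :
    expMeasure 1 (Ioi x) = ENNReal.ofReal (Real.exp (-x)) := by
  haveI := isProbabilityMeasure_expMeasure (r := 1) one_pos
  have h1 : expMeasure 1 (Iic x) + expMeasure 1 (Ioi x) = 1 := by
    rw [← measure_univ (μ := expMeasure 1), ← Iic_union_Ioi (a := x),
      measure_union (Iic_disjoint_Ioi le_rfl) measurableSet_Ioi]
  rw [expMeasure_Iic, if_pos hx] at h1
  have hle : Real.exp (-x) ≤ 1 := Real.exp_le_one_iff.2 (by linarith)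
  have : (1 : ℝ≥0∞) = ENNReal.ofReal (1 - Real.exp (-x)) + ENNReal.ofReal (Real.exp (-x)) := by
    rw [← ENNReal.ofReal_add (by linarith) (Real.exp_pos _).le]
    norm_num
  rw [this] at h1
  exact (ENNReal.add_right_inj (by simp)).1 h1

lemma expMeasure_Ici {x : ℝ} (hx : 0 ≤ x) :
    expMeasure 1 (Ici x) = ENNReal.ofReal (Real.exp (-x)) := by
  have h : expMeasure 1 (Ici x) = expMeasure 1 (Ioi x) := by
    refine measure_congr (Filter.eventuallyEq_set.2 ?_)
    rw [ae_iff]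
    refine measure_mono_null (fun y hy => ?_) (expMeasure_singleton x)
    simp only [mem_setOf_eq, mem_Ici, mem_Ioi] at hy
    simp only [mem_singleton_iff]
    by_contra hne
    exact hy ⟨fun h => lt_of_le_of_ne h (Ne.symm hne), le_of_lt⟩
  rw [h, expMeasure_Ioi hx]

lemma expMeasure_ae_pos : ∀ᵐ x ∂(expMeasure 1), 0 < x := by
  rw [ae_iff]
  have : {x : ℝ | ¬ 0 < x} = Iic 0 := by ext x; simp
  rw [this, expMeasure_Iic]; simp

end GumbelAux

namespace GumbelAux

/-- The transformation from exponential to Gumbel. -/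
noncomputable def T (β : ℝ) : ℝ → ℝ := fun x => -Real.log x / β

lemma measurable_T (β : ℝ) : Measurable (T β) := Real.measurable_log.neg.div_const _

/-- The Gumbel measure with rate `β` (scale `β⁻¹`). -/
noncomputable def gumbelν (β : ℝ) : Measure ℝ := (expMeasure 1).map (T β)

instance (β : ℝ) : IsProbabilityMeasure (gumbelν β) := by
  haveI := isProbabilityMeasure_expMeasure (r := 1) one_pos
  exact Measure.isProbabilityMeasure_map (measurable_T β).aemeasurable

lemma gumbelν_Iic {β : ℝ} (hβ : 0 < β) (t : ℝ) :
    gumbelν β (Iic t) = ENNReal.ofReal (Real.exp (-Real.exp (-(β * t)))) := by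
  rw [gumbelν, Measure.map_apply (measurable_T β) measurableSet_Iic]
  have h : expMeasure 1 (T β ⁻¹' Iic t) = expMeasure 1 (Ici (Real.exp (-(β * t)))) := by
    refine measure_congr (Filter.eventuallyEq_set.2 ?_)
    filter_upwards [expMeasure_ae_pos] with x hx
    simp only [mem_preimage, mem_Iic, mem_Ici, T]
    rw [div_le_iff₀ hβ, neg_le, ← Real.le_log_iff_exp_le hx]
    constructor <;> intro h <;> linarith
  rw [h, expMeasure_Ici (Real.exp_pos _).le]

lemma gumbelν_Iio {β : ℝ} (hβ : 0 < β) (t : ℝ) :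
    gumbelν β (Iio t) = ENNReal.ofReal (Real.exp (-Real.exp (-(β * t)))) := by
  rw [gumbelν, Measure.map_apply (measurable_T β) measurableSet_Iio]
  have h : expMeasure 1 (T β ⁻¹' Iio t) = expMeasure 1 (Ioi (Real.exp (-(β * t)))) := by
    refine measure_congr (Filter.eventuallyEq_set.2 ?_)
    filter_upwards [expMeasure_ae_pos] with x hx
    simp only [mem_preimage, mem_Iio, mem_Ioi, T]
    rw [div_lt_iff₀ hβ, neg_lt, ← Real.lt_log_iff_exp_lt hx]
    constructor <;> intro h <;> linarith
  rw [h, expMeasure_Ioi (Real.exp_pos _).le]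

end GumbelAux

namespace GumbelAux

lemma integral_exp_neg_mul {K : ℝ} (hK : 0 < K) :
    ∫ x in Ioi (0:ℝ), Real.exp (-(K * x)) = K⁻¹ := by
  have hderiv : ∀ x ∈ Ici (0:ℝ),
      HasDerivAt (fun x => -K⁻¹ * Real.exp (-(K * x))) (Real.exp (-(K * x))) x := by
    intro x _
    have h1 : HasDerivAt (fun x : ℝ => -(K * x)) (-K) x := by
      simpa using (hasDerivAt_id x).const_mul (-K)
    have h2 := (h1.exp).const_mul (-K⁻¹)
    have heq : -K⁻¹ * (Real.exp (-(K * x)) * -K) = Real.exp (-(K * x)) := by field_simp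
    rw [← heq]
    exact h2
  have htop : Tendsto (fun x => -K⁻¹ * Real.exp (-(K * x))) atTop (nhds 0) := by
    have h3 : Tendsto (fun x : ℝ => -(K * x)) atTop atBot :=
      tendsto_neg_atTop_atBot.comp (tendsto_id.const_mul_atTop hK)
    have := Real.tendsto_exp_atBot.comp h3
    simpa using this.const_mul (-K⁻¹)
  have hint : IntegrableOn (fun x : ℝ => Real.exp (-(K * x))) (Ioi 0) := by
    simpa [neg_mul] using exp_neg_integrableOn_Ioi 0 hK
  have := integral_Ioi_of_hasDerivAt_of_tendsto' (fun x hx => hderiv x hx) hint htop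
  rw [this]
  simp [Real.exp_zero]

lemma lintegral_gumbelν {β : ℝ} (hβ : 0 < β) {K : ℝ} (hK : 1 ≤ K) :
    ∫⁻ t, ENNReal.ofReal (Real.exp (-((K - 1) * Real.exp (-(β * t))))) ∂(gumbelν β)
      = ENNReal.ofReal K⁻¹ := by
  have hK0 : 0 < K := lt_of_lt_of_le one_pos hK
  have hm1 : Measurable fun t : ℝ => Real.exp (-((K - 1) * Real.exp (-(β * t)))) :=
    Real.measurable_exp.comp (((Real.measurable_exp.comp
      (measurable_id.const_mul β).neg).const_mul (K - 1)).neg)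
  have hg : Measurable fun t : ℝ => ENNReal.ofReal (Real.exp (-((K - 1) * Real.exp (-(β * t))))) :=
    hm1.ennreal_ofReal
  rw [gumbelν, lintegral_map hg (measurable_T β)]
  have hcongr : ∀ᵐ x ∂(expMeasure 1),
      ENNReal.ofReal (Real.exp (-((K - 1) * Real.exp (-(β * T β x)))))
        = ENNReal.ofReal (Real.exp (-((K - 1) * x))) := by
    filter_upwards [expMeasure_ae_pos] with x hx
    have : -(β * T β x) = Real.log x := by
      simp only [T]
      field_simp
    rw [this, Real.exp_log hx]
  rw [lintegral_congr_ae hcongr]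
  have hpdf : Measurable (exponentialPDF 1) := (measurable_exponentialPDFReal 1).ennreal_ofReal
  have hg2 : Measurable fun x : ℝ => ENNReal.ofReal (Real.exp (-((K - 1) * x))) :=
    (Real.measurable_exp.comp (measurable_id.const_mul (K - 1)).neg).ennreal_ofReal
  rw [show expMeasure 1 = volume.withDensity (exponentialPDF 1) from rfl,
    lintegral_withDensity_eq_lintegral_mul _ hpdf hg2]
  have hpt : ∀ x : ℝ, (exponentialPDF 1 * fun x => ENNReal.ofReal (Real.exp (-((K - 1) * x)))) x
      = (Ici (0:ℝ)).indicator (fun x => ENNReal.ofReal (Real.exp (-(K * x)))) x := by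
    intro x
    simp only [Pi.mul_apply, indicator]
    split_ifs with h
    · rw [exponentialPDF_of_nonneg h, ← ENNReal.ofReal_mul (by positivity)]
      congr 1
      rw [mul_assoc, ← Real.exp_add]
      norm_num
      congr 1
      ring
    · rw [exponentialPDF_of_neg (lt_of_not_ge h), zero_mul]
  have hint : IntegrableOn (fun x : ℝ => Real.exp (-(K * x))) (Ioi 0) := by
    simpa [neg_mul] using exp_neg_integrableOn_Ioi (0:ℝ) hK0
  rw [lintegral_congr hpt, lintegral_indicator measurableSet_Ici,
    Measure.restrict_congr_set Ioi_ae_eq_Ici.symm, ← integral_exp_neg_mul hK0]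
  exact (ofReal_integral_eq_lintegral_ofReal hint
    (Filter.Eventually.of_forall fun x => (Real.exp_pos _).le)).symm

end GumbelAux

open MeasureTheory

theorem gumbel_power_acquisition {Ω : Type*} [MeasurableSpace Ω] (P : Measure Ω)
    [IsProbabilityMeasure P] (n : ℕ) (s : Fin n → ℝ) (hs : ∀ i, 0 < s i)
    (β : ℝ) (hβ : 0 < β) (ε : Fin n → Ω → ℝ) (hmeas : ∀ i, Measurable (ε i))
    (hindep : ProbabilityTheory.iIndepFun ε P)
    (hgumbel : ∀ i, IsGumbel P (ε i) 0 β⁻¹) (i : Fin n) :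
    P {ω | ∀ j, j ≠ i → Real.log (s j) + ε j ω < Real.log (s i) + ε i ω} =
      ENNReal.ofReal (s i ^ β / ∑ j, s j ^ β) := by
  classical
  open GumbelAux Set Filter in
  -- marginal laws
  have hmap : ∀ j, P.map (ε j) = gumbelν β := by
    intro j
    haveI : IsProbabilityMeasure (P.map (ε j)) := Measure.isProbabilityMeasure_map (hmeas j).aemeasurable
    refine MeasureTheory.Measure.ext_of_Iic _ _ fun a => ?_
    rw [Measure.map_apply (hmeas j) measurableSet_Iic, gumbelν_Iic hβ]
    have harg : -(a - 0) / β⁻¹ = -(β * a) := by field_simp; ring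
    have := hgumbel j a
    rw [harg] at this
    exact this
  -- joint law
  set X : Ω → (Fin n → ℝ) := fun ω j => ε j ω with hXdef
  have hX : Measurable X := measurable_pi_lambda _ hmeas
  have hjoint : P.map X = Measure.pi (fun _ : Fin n => gumbelν β) := by
    refine (Measure.pi_eq fun t ht => ?_).symm
    rw [Measure.map_apply hX (MeasurableSet.univ_pi ht)]
    have hpre : X ⁻¹' (Set.pi univ t) = ⋂ j, ε j ⁻¹' t j := by
      ext ω; simp [X, Set.mem_pi]
    rw [hpre, hindep.meas_iInter fun j => ⟨t j, ht j, rfl⟩]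
    exact Finset.prod_congr rfl fun j _ => by
      rw [← hmap j, Measure.map_apply (hmeas j) (ht j)]
  obtain ⟨m, rfl⟩ : ∃ m, n = m + 1 := ⟨n - 1, (Nat.succ_pred_eq_of_pos i.pos).symm⟩
  set c : Fin (m + 1) → ℝ := fun j => Real.log (s i) - Real.log (s j) with hc
  set A : Set (Fin (m + 1) → ℝ) := {x | ∀ j, j ≠ i → x j < x i + c j} with hAdef
  have hset : {ω | ∀ j, j ≠ i → Real.log (s j) + ε j ω < Real.log (s i) + ε i ω}
      = X ⁻¹' A := by
    ext ω
    simp only [mem_setOf_eq, mem_preimage, hAdef, X, c]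
    constructor
    · intro h j hj; have := h j hj; linarith
    · intro h j hj; have := h j hj; linarith
  have hA : MeasurableSet A := by
    have : A = ⋂ j, {x : Fin (m + 1) → ℝ | j ≠ i → x j < x i + c j} := by
      ext x; simp [hAdef]
    rw [this]
    refine MeasurableSet.iInter fun j => ?_
    by_cases hj : j = i
    · have : {x : Fin (m + 1) → ℝ | j ≠ i → x j < x i + c j} = univ := by
        ext x; simp [hj]
      rw [this]; exact MeasurableSet.univ
    · have : {x : Fin (m + 1) → ℝ | j ≠ i → x j < x i + c j} = {x | x j < x i + c j} := by
        ext x; simp [hj]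
      rw [this]
      exact measurableSet_lt (measurable_pi_apply j) ((measurable_pi_apply i).add_const _)
  rw [hset, ← Measure.map_apply hX hA, hjoint]
  -- split off coordinate i
  have hmp := (measurePreserving_piFinSuccAbove (fun _ : Fin (m + 1) => gumbelν β) i).symm
  rw [← hmp.measure_preimage hA.nullMeasurableSet]
  set S : Set (ℝ × (Fin m → ℝ)) := {p | ∀ k, p.2 k < p.1 + c (i.succAbove k)} with hSdef
  have hpre2 : (MeasurableEquiv.piFinSuccAbove (fun _ : Fin (m + 1) => ℝ) i).symm ⁻¹' A = S := by
    ext ⟨x, y⟩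
    simp only [mem_preimage, MeasurableEquiv.piFinSuccAbove_symm_apply, hAdef, hSdef,
      mem_setOf_eq]
    constructor
    · intro h k
      have := h (i.succAbove k) (Fin.succAbove_ne i k)
      simpa [Fin.insertNth_apply_same, Fin.insertNth_apply_succAbove] using this
    · intro h j hj
      obtain ⟨k, rfl⟩ := Fin.exists_succAbove_eq hj
      simpa [Fin.insertNth_apply_same, Fin.insertNth_apply_succAbove] using h k
  have hS : MeasurableSet S := by
    have : S = ⋂ k, {p : ℝ × (Fin m → ℝ) | p.2 k < p.1 + c (i.succAbove k)} := by
      ext p; simp [hSdef]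
    rw [this]
    exact MeasurableSet.iInter fun k => measurableSet_lt (by fun_prop) (by fun_prop)
  rw [hpre2, Measure.prod_apply hS]
  -- the inner measure is a product of CDF values
  have hinner : ∀ x : ℝ, (Measure.pi fun _ : Fin m => gumbelν β) (Prod.mk x ⁻¹' S)
      = ∏ k : Fin m, ENNReal.ofReal (Real.exp (-Real.exp (-(β * (x + c (i.succAbove k)))))) := by
    intro x
    have : Prod.mk x ⁻¹' S = Set.pi univ fun k : Fin m => Iio (x + c (i.succAbove k)) := by
      ext y; simp [hSdef, Set.mem_pi]
    rw [this, Measure.pi_pi]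
    exact Finset.prod_congr rfl fun k _ => gumbelν_Iio hβ _
  -- identify the product with the Gumbel integrand
  set K : ℝ := (∑ j, s j ^ β) / s i ^ β with hKdef
  have hsiβ : (0:ℝ) < s i ^ β := Real.rpow_pos_of_pos (hs i) β
  have hpow : ∀ j, Real.exp (-(β * c j)) = s j ^ β / s i ^ β := by
    intro j
    rw [Real.rpow_def_of_pos (hs j), Real.rpow_def_of_pos (hs i), ← Real.exp_sub]
    congr 1
    simp only [hc]
    ring
  have hKsum : ∑ k : Fin m, Real.exp (-(β * c (i.succAbove k))) = K - 1 := by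
    have h1 : ∑ j : Fin (m + 1), (s j ^ β / s i ^ β) = K := by
      rw [hKdef, ← Finset.sum_div]
    have h2 := Fin.sum_univ_succAbove (fun j => s j ^ β / s i ^ β) i
    simp only [div_self hsiβ.ne'] at h2
    have : ∀ k : Fin m, Real.exp (-(β * c (i.succAbove k))) = s (i.succAbove k) ^ β / s i ^ β :=
      fun k => hpow _
    rw [Finset.sum_congr rfl fun k _ => this k]
    rw [h1] at h2
    linarith [h2]
  have hK1 : 1 ≤ K := by
    have : (s i ^ β / s i ^ β) ≤ ∑ j : Fin (m + 1), (s j ^ β / s i ^ β) :=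
      Finset.single_le_sum (f := fun j => s j ^ β / s i ^ β)
        (fun j _ => div_nonneg (Real.rpow_pos_of_pos (hs j) β).le hsiβ.le) (Finset.mem_univ i)
    rw [div_self hsiβ.ne'] at this
    rwa [hKdef, Finset.sum_div]
  have hprod : ∀ x : ℝ,
      (∏ k : Fin m, ENNReal.ofReal (Real.exp (-Real.exp (-(β * (x + c (i.succAbove k)))))))
        = ENNReal.ofReal (Real.exp (-((K - 1) * Real.exp (-(β * x))))) := by
    intro x
    rw [← ENNReal.ofReal_prod_of_nonneg fun k _ => (Real.exp_pos _).le]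
    congr 1
    rw [← Real.exp_sum]
    congr 1
    have : ∀ k : Fin m, -Real.exp (-(β * (x + c (i.succAbove k))))
        = -(Real.exp (-(β * c (i.succAbove k))) * Real.exp (-(β * x))) := by
      intro k
      rw [← Real.exp_add]
      congr 2
      ring
    rw [Finset.sum_congr rfl fun k _ => this k, Finset.sum_neg_distrib,
      ← Finset.sum_mul, hKsum]
  calc ∫⁻ x, (Measure.pi fun _ : Fin m => gumbelν β) (Prod.mk x ⁻¹' S) ∂(gumbelν β)
      = ∫⁻ x, ENNReal.ofReal (Real.exp (-((K - 1) * Real.exp (-(β * x))))) ∂(gumbelν β) := by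
        refine lintegral_congr fun x => ?_
        rw [hinner x, hprod x]
    _ = ENNReal.ofReal K⁻¹ := lintegral_gumbelν hβ hK1
    _ = ENNReal.ofReal (s i ^ β / ∑ j, s j ^ β) := by
        congr 1
        rw [hKdef]
        rw [inv_div]
end

section
/- In the Gumbel-top-k setting with i.i.d. Gumbel(0,1) perturbations ε₁, …, εₙ of scores s₁, …, sₙ, the event that index i is the overall argmax is independent of the value of the maximum: P(argmax = i ∧ max ≤ m) = (exp(sᵢ)/∑ⱼ exp(sⱼ)) · exp(−exp(−(m − log ∑ⱼ exp(sⱼ)))). -/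
open MeasureTheory Filter Set Topology


lemma gk_hasDerivAt (C : ℝ) (hC : 0 < C) (x : ℝ) :
    HasDerivAt (fun x => C⁻¹ * Real.exp (-(C * Real.exp (-x))))
      (Real.exp (-x) * Real.exp (-(C * Real.exp (-x)))) x := by
  have h1 : HasDerivAt (fun x : ℝ => -x) (-1) x := (hasDerivAt_id x).neg
  have h2 := h1.exp
  have h3 := (h2.const_mul C).neg
  have h4 := h3.exp
  have h5 := h4.const_mul C⁻¹
  refine h5.congr_deriv ?_
  simp only [Pi.neg_apply]
  field_simp

lemma gk_tendsto (C : ℝ) (hC : 0 < C) :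
    Tendsto (fun x => C⁻¹ * Real.exp (-(C * Real.exp (-x)))) atBot (𝓝 0) := by
  have h1 : Tendsto (fun x : ℝ => -x) atBot atTop := tendsto_neg_atBot_atTop
  have h2 : Tendsto (fun x : ℝ => Real.exp (-x)) atBot atTop :=
    Real.tendsto_exp_atTop.comp h1
  have h3 : Tendsto (fun x : ℝ => -(C * Real.exp (-x))) atBot atBot :=
    tendsto_neg_atTop_atBot.comp (h2.const_mul_atTop hC)
  have h4 : Tendsto (fun x : ℝ => Real.exp (-(C * Real.exp (-x)))) atBot (𝓝 0) :=
    Real.tendsto_exp_atBot.comp h3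
  simpa using h4.const_mul C⁻¹

lemma gk_integrableOn (C a : ℝ) (hC : 0 < C) :
    IntegrableOn (fun x => Real.exp (-x) * Real.exp (-(C * Real.exp (-x)))) (Set.Iic a) := by
  set f := fun x => Real.exp (-x) * Real.exp (-(C * Real.exp (-x))) with hf
  have hcont : Continuous f := by continuity
  have hnn : ∀ x, 0 ≤ f x := fun x => mul_nonneg (Real.exp_pos _).le (Real.exp_pos _).le
  refine integrableOn_Iic_of_intervalIntegral_norm_bounded (l := atBot) (a := id) C⁻¹ a
    (fun t => hcont.integrableOn_Ioc) tendsto_id ?_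
  filter_upwards [eventually_le_atBot a] with t ht
  simp only [id]
  have key : ∫ x in t..a, f x =
      C⁻¹ * Real.exp (-(C * Real.exp (-a))) - C⁻¹ * Real.exp (-(C * Real.exp (-t))) := by
    apply intervalIntegral.integral_eq_sub_of_hasDerivAt
    · exact fun x _ => gk_hasDerivAt C hC x
    · exact hcont.intervalIntegrable t a
  have : ∫ x in t..a, ‖f x‖ = ∫ x in t..a, f x := by
    congr 1; ext x; exact Real.norm_of_nonneg (hnn x)
  rw [this, key]
  have h1 : C⁻¹ * Real.exp (-(C * Real.exp (-a))) ≤ C⁻¹ * 1 := by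
    apply mul_le_mul_of_nonneg_left _ (by positivity)
    rw [Real.exp_le_one_iff]
    simp only [neg_nonpos]
    positivity
  nlinarith [mul_pos (inv_pos.mpr hC) (Real.exp_pos (-(C * Real.exp (-t))))]

lemma gk_integral (C a : ℝ) (hC : 0 < C) :
    ∫ x in Set.Iic a, Real.exp (-x) * Real.exp (-(C * Real.exp (-x))) =
      C⁻¹ * Real.exp (-(C * Real.exp (-a))) := by
  have := integral_Iic_of_hasDerivAt_of_tendsto'
    (fun x _ => gk_hasDerivAt C hC x) (gk_integrableOn C a hC) (gk_tendsto C hC)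
  simpa using this



noncomputable def gumbelDen : ℝ → ℝ := fun x => Real.exp (-x) * Real.exp (-(1 * Real.exp (-x)))

noncomputable def gumbelM : Measure ℝ :=
  volume.withDensity fun x => ENNReal.ofReal (gumbelDen x)

lemma gumbelDen_meas : Measurable gumbelDen := by
  have : Continuous gumbelDen := by unfold gumbelDen; continuity
  exact this.measurable

lemma gk_set_lintegral (C a : ℝ) (hC : 0 < C) :
    ∫⁻ x in Set.Iic a, ENNReal.ofReal (Real.exp (-x) * Real.exp (-(C * Real.exp (-x)))) =
      ENNReal.ofReal (C⁻¹ * Real.exp (-(C * Real.exp (-a)))) := by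
  rw [← ofReal_integral_eq_lintegral_ofReal (gk_integrableOn C a hC)
    (Filter.Eventually.of_forall fun x => by positivity), gk_integral C a hC]

lemma gumbelM_Iic (g : ℝ) :
    gumbelM (Set.Iic g) = ENNReal.ofReal (Real.exp (-Real.exp (-g))) := by
  rw [gumbelM, withDensity_apply _ measurableSet_Iic]
  have := gk_set_lintegral 1 g one_pos
  simp only [one_mul, inv_one] at this
  simpa [gumbelDen] using this

lemma gumbelM_singleton (g : ℝ) : gumbelM {g} = 0 :=
  withDensity_absolutelyContinuous _ _ (measure_singleton g)

lemma gumbelM_Iio (g : ℝ) :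
    gumbelM (Set.Iio g) = ENNReal.ofReal (Real.exp (-Real.exp (-g))) := by
  have h : Set.Iic g = {g} ∪ Set.Iio g := by
    ext x; simp [le_iff_lt_or_eq, or_comm]
  have := gumbelM_Iic g
  rw [h, measure_union (by simp) measurableSet_Iio, gumbelM_singleton, zero_add] at this
  exact this

instance : IsProbabilityMeasure gumbelM := by
  constructor
  have h1 : Tendsto (fun g : ℝ => gumbelM (Set.Iic g)) atTop (𝓝 (gumbelM univ)) :=
    tendsto_measure_Iic_atTop _
  have h2 : Tendsto (fun g : ℝ => gumbelM (Set.Iic g)) atTop (𝓝 1) := by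
    simp only [gumbelM_Iic]
    have : Tendsto (fun g : ℝ => Real.exp (-Real.exp (-g))) atTop (𝓝 1) := by
      have hb : Tendsto (fun g : ℝ => -Real.exp (-g)) atTop (𝓝 0) := by
        simpa using (Real.tendsto_exp_atBot.comp tendsto_neg_atTop_atBot).neg
      simpa [Function.comp_def] using (Real.continuous_exp.tendsto 0).comp hb
    have := (ENNReal.continuous_ofReal.tendsto 1).comp this
    simpa [Function.comp_def] using this
  exact tendsto_nhds_unique h1 h2



section PiS
variable {n : ℕ} (i : Fin n)

lemma pi_S (c : Fin n → ℝ) (a : ℝ) :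
    Measure.pi (fun _ : Fin n => gumbelM)
      {x | x i ≤ a ∧ ∀ j, j ≠ i → x j < x i + c j} =
    ∫⁻ t in Set.Iic a, ∏ j : {j : Fin n // ¬ j = i}, gumbelM (Set.Iio (t + c j)) ∂gumbelM := by
  classical
  set e := MeasurableEquiv.piEquivPiSubtypeProd (fun _ : Fin n => ℝ) (fun j => j = i) with he
  have hmp := measurePreserving_piEquivPiSubtypeProd (fun _ : Fin n => gumbelM) (fun j => j = i)
  set T : Set (({j : Fin n // j = i} → ℝ) × ({j : Fin n // ¬ j = i} → ℝ)) :=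
    {q | q.1 ⟨i, rfl⟩ ≤ a ∧ ∀ j : {j : Fin n // ¬ j = i}, q.2 j < q.1 ⟨i, rfl⟩ + c j} with hTdef
  have hT : MeasurableSet T := by
    have : T = {q : ({j : Fin n // j = i} → ℝ) × ({j : Fin n // ¬ j = i} → ℝ) | q.1 ⟨i, rfl⟩ ≤ a} ∩
        ⋂ j : {j : Fin n // ¬ j = i}, {q | q.2 j < q.1 ⟨i, rfl⟩ + c j} := by
      ext q; simp [hTdef, Set.mem_iInter]
    rw [this]
    exact (measurableSet_le ((measurable_pi_apply _).comp measurable_fst) measurable_const).inter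
      (MeasurableSet.iInter fun j => measurableSet_lt (measurable_snd.eval)
        (((measurable_pi_apply _).comp measurable_fst).add_const _))
  have hpre : e ⁻¹' T = {x | x i ≤ a ∧ ∀ j, j ≠ i → x j < x i + c j} := by
    ext x
    simp only [he, hTdef, Set.mem_preimage, Set.mem_setOf_eq,
      MeasurableEquiv.piEquivPiSubtypeProd, MeasurableEquiv.coe_mk,
      Equiv.piEquivPiSubtypeProd_apply, Subtype.forall]
  rw [← hpre, hmp.measure_preimage hT.nullMeasurableSet, Measure.prod_apply hT]
  have hslice : ∀ y : {j : Fin n // j = i} → ℝ,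
      (Measure.pi fun _ : {j : Fin n // ¬ j = i} => gumbelM) (Prod.mk y ⁻¹' T) =
        Set.indicator (Set.Iic a)
          (fun t => ∏ j : {j : Fin n // ¬ j = i}, gumbelM (Set.Iio (t + c j))) (y ⟨i, rfl⟩) := by
    intro y
    by_cases hy : y ⟨i, rfl⟩ ≤ a
    · have h1 : Prod.mk y ⁻¹' T = Set.pi Set.univ (fun j : {j : Fin n // ¬ j = i} => Set.Iio (y ⟨i, rfl⟩ + c j)) := by
        ext z; simp [hTdef, hy]
      rw [h1, Measure.pi_pi, Set.indicator_of_mem (by simpa using hy)]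
    · have h1 : Prod.mk y ⁻¹' T = ∅ := by
        ext z; simp [hTdef, hy]
      rw [h1, measure_empty, Set.indicator_of_notMem (by simpa using hy)]
  simp only [hslice]
  have hfm : Measurable fun t : ℝ => ∏ j : {j : Fin n // ¬ j = i}, gumbelM (Set.Iio (t + c j)) := by
    apply Finset.measurable_prod
    intro j _
    simp only [gumbelM_Iio]
    exact ENNReal.measurable_ofReal.comp
      ((Real.continuous_exp.comp (((Real.continuous_exp.comp
        (continuous_id.add continuous_const).neg)).neg)).measurable)
  have hu : Measurable (fun y : {j : Fin n // j = i} → ℝ => y ⟨i, rfl⟩) := measurable_pi_apply _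
  have hmapu : Measure.map (fun y : {j : Fin n // j = i} → ℝ => y ⟨i, rfl⟩)
      (Measure.pi fun _ : {j : Fin n // j = i} => gumbelM) = gumbelM := by
    refine Measure.ext_of_Iic _ _ fun g => ?_
    rw [Measure.map_apply hu measurableSet_Iic]
    have h2 : (fun y : {j : Fin n // j = i} → ℝ => y ⟨i, rfl⟩) ⁻¹' Set.Iic g =
        Set.pi Set.univ (fun _ : {j : Fin n // j = i} => Set.Iic g) := by
      ext y
      simp only [Set.mem_preimage, Set.mem_pi, Set.mem_univ, forall_true_left, Set.mem_Iic]
      constructor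
      · intro h j
        have : j = ⟨i, rfl⟩ := Subtype.ext j.2
        rw [this]; exact h
      · intro h; exact h ⟨i, rfl⟩
    rw [h2, Measure.pi_pi, Finset.prod_const]
    simp
  have hlm := lintegral_map (μ := Measure.pi fun _ : {j : Fin n // j = i} => gumbelM)
    (f := (Set.Iic a).indicator fun t => ∏ j : {j : Fin n // ¬ j = i}, gumbelM (Set.Iio (t + c j)))
    (hfm.indicator measurableSet_Iic) hu
  rw [hmapu] at hlm
  rw [← lintegral_indicator measurableSet_Iic]
  convert hlm.symm using 2 <;> congr!
end PiS



theorem gumbel_argmax_indep_max {Ω : Type*} [MeasurableSpace Ω] (P : Measure Ω)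
    [IsProbabilityMeasure P] (n : ℕ) (hn : 0 < n) (s : Fin n → ℝ)
    (ε : Fin n → Ω → ℝ) (hmeas : ∀ i, Measurable (ε i))
    (hindep : ProbabilityTheory.iIndepFun ε P)
    (hgumbel : ∀ i, IsGumbel P (ε i) 0 1) (i : Fin n) (m : ℝ) :
    P {ω | (∀ j, j ≠ i → s j + ε j ω < s i + ε i ω) ∧ (⨆ k, (s k + ε k ω)) ≤ m} =
      ENNReal.ofReal (Real.exp (s i) / ∑ j, Real.exp (s j)) *
        ENNReal.ofReal
          (Real.exp (-Real.exp (-(m - Real.log (∑ j, Real.exp (s j)))))) := by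
  classical
  haveI : NeZero n := ⟨hn.ne'⟩
  set Z : ℝ := ∑ j, Real.exp (s j) with hZdef
  have hZ : 0 < Z := Finset.sum_pos (fun j _ => Real.exp_pos _) ⟨i, Finset.mem_univ i⟩
  -- laws
  have hlaw : ∀ j, P.map (ε j) = gumbelM := by
    intro j
    haveI : IsProbabilityMeasure (P.map (ε j)) :=
      Measure.isProbabilityMeasure_map (hmeas j).aemeasurable
    refine Measure.ext_of_Iic _ _ fun g => ?_
    rw [Measure.map_apply (hmeas j) measurableSet_Iic, gumbelM_Iic]
    have := hgumbel j g
    simpa [Set.preimage] using this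
  -- joint law
  set Φ : Ω → (Fin n → ℝ) := fun ω j => ε j ω with hΦdef
  have hΦ : Measurable Φ := measurable_pi_lambda _ hmeas
  have hjoint : P.map Φ = Measure.pi fun _ : Fin n => gumbelM := by
    refine (Measure.pi_eq fun A hA => ?_).symm
    rw [Measure.map_apply hΦ (MeasurableSet.univ_pi hA)]
    have hpre : Φ ⁻¹' Set.pi Set.univ A = ⋂ j, ε j ⁻¹' A j := by
      ext ω; simp [hΦdef, Set.mem_pi]
    rw [hpre]
    have h1 := hindep.measure_inter_preimage_eq_mul Finset.univ (sets := A)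
      (fun j _ => hA j)
    simp only [Finset.mem_univ, Set.iInter_true] at h1
    rw [h1]
    refine Finset.prod_congr rfl fun j _ => ?_
    rw [← hlaw j, Measure.map_apply (hmeas j) (hA j)]
  -- event rewriting
  set a : ℝ := m - s i with hadef
  set c : Fin n → ℝ := fun j => s i - s j with hcdef
  set S : Set (Fin n → ℝ) := {x | x i ≤ a ∧ ∀ j, j ≠ i → x j < x i + c j} with hSdef
  have hS : MeasurableSet S := by
    have : S = {x : Fin n → ℝ | x i ≤ a} ∩
        ⋂ j, {x : Fin n → ℝ | j ≠ i → x j < x i + c j} := by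
      ext x; simp [hSdef, Set.mem_iInter]
    rw [this]
    refine (measurableSet_le (measurable_pi_apply i) measurable_const).inter
      (MeasurableSet.iInter fun j => ?_)
    by_cases hj : j = i
    · simp [hj]
    · have : {x : Fin n → ℝ | j ≠ i → x j < x i + c j} = {x | x j < x i + c j} := by
        ext x; simp [hj]
      rw [this]
      exact measurableSet_lt (measurable_pi_apply j) ((measurable_pi_apply i).add_const _)
  have hev : {ω | (∀ j, j ≠ i → s j + ε j ω < s i + ε i ω) ∧ (⨆ k, (s k + ε k ω)) ≤ m} =
      Φ ⁻¹' S := by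
    ext ω
    simp only [Set.mem_setOf_eq, Set.mem_preimage, hSdef, hΦdef]
    constructor
    · rintro ⟨h1, h2⟩
      constructor
      · have : s i + ε i ω ≤ ⨆ k, (s k + ε k ω) :=
          le_ciSup (f := fun k => s k + ε k ω) (Set.Finite.bddAbove (Set.finite_range _)) i
        simp only [hadef]
        linarith
      · intro j hj
        have := h1 j hj
        simp only [hcdef]
        linarith
    · rintro ⟨h1, h2⟩
      have h3 : ∀ j, j ≠ i → s j + ε j ω < s i + ε i ω := by
        intro j hj
        have := h2 j hj
        simp only [hcdef] at this
        linarith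
      refine ⟨h3, ?_⟩
      apply ciSup_le
      intro k
      by_cases hk : k = i
      · subst hk; simp only [hadef] at h1; linarith
      · have := h3 k hk
        simp only [hadef] at h1
        linarith
  rw [hev, ← Measure.map_apply hΦ hS, hjoint, hSdef, pi_S i c a]
  -- product evaluation
  set D : ℝ := ∑ j : {j : Fin n // ¬ j = i}, Real.exp (-(c j)) with hDdef
  have hDnn : 0 ≤ D := Finset.sum_nonneg fun j _ => (Real.exp_pos _).le
  set C : ℝ := 1 + D with hCdef
  have hC : 0 < C := by positivity
  have hprod : ∀ t : ℝ, (∏ j : {j : Fin n // ¬ j = i}, gumbelM (Set.Iio (t + c j))) =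
      ENNReal.ofReal (Real.exp (-(Real.exp (-t) * D))) := by
    intro t
    simp only [gumbelM_Iio]
    rw [← ENNReal.ofReal_prod_of_nonneg (fun _ _ => (Real.exp_pos _).le)]
    congr 1
    rw [← Real.exp_sum]
    congr 1
    rw [hDdef, Finset.mul_sum, ← Finset.sum_neg_distrib]
    refine Finset.sum_congr rfl fun j _ => ?_
    rw [← Real.exp_add]
    ring_nf
  simp only [hprod]
  -- lintegral evaluation
  have hrestrict : gumbelM.restrict (Set.Iic a) =
      (volume.restrict (Set.Iic a)).withDensity fun x => ENNReal.ofReal (gumbelDen x) := by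
    rw [gumbelM, restrict_withDensity measurableSet_Iic]
  have hf : Measurable fun x => ENNReal.ofReal (gumbelDen x) :=
    ENNReal.measurable_ofReal.comp gumbelDen_meas
  have hgcont : Continuous fun t : ℝ => Real.exp (-(Real.exp (-t) * D)) := by continuity
  have hg : Measurable fun t : ℝ => ENNReal.ofReal (Real.exp (-(Real.exp (-t) * D))) :=
    ENNReal.measurable_ofReal.comp hgcont.measurable
  rw [hrestrict, lintegral_withDensity_eq_lintegral_mul _ hf hg]
  have hptwise : ∀ t : ℝ,
      (fun x => ENNReal.ofReal (gumbelDen x)) t *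
        ENNReal.ofReal (Real.exp (-(Real.exp (-t) * D))) =
      ENNReal.ofReal (Real.exp (-t) * Real.exp (-(C * Real.exp (-t)))) := by
    intro t
    rw [← ENNReal.ofReal_mul (by unfold gumbelDen; positivity)]
    congr 1
    unfold gumbelDen
    rw [mul_assoc, ← Real.exp_add]
    congr 2
    ring
  simp only [Pi.mul_apply, hptwise]
  rw [gk_set_lintegral C a hC]
  -- final arithmetic
  have hZsplit : Z = Real.exp (s i) + ∑ j ∈ Finset.univ.erase i, Real.exp (s j) :=
    (Finset.add_sum_erase _ _ (Finset.mem_univ i)).symm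
  have hCZ : C = Z / Real.exp (s i) := by
    have hsum : D = (∑ j ∈ Finset.univ.erase i, Real.exp (s j)) / Real.exp (s i) := by
      have h1 : D = ∑ j ∈ Finset.univ.filter (fun j : Fin n => ¬ j = i),
          Real.exp (s j) / Real.exp (s i) := by
        rw [hDdef, Finset.sum_subtype (p := fun j : Fin n => ¬ j = i)
          (Finset.univ.filter (fun j : Fin n => ¬ j = i))
          (by intro j; simp) (fun j => Real.exp (s j) / Real.exp (s i))]
        refine Finset.sum_congr rfl fun j _ => ?_
        rw [← Real.exp_sub]
        congr 1
        simp only [hcdef]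
        ring
      rw [h1, ← Finset.sum_div]
      congr 2
      ext j; simp [Finset.mem_erase, and_comm]
    rw [hCdef, hsum, hZsplit]
    field_simp
  rw [← ENNReal.ofReal_mul (by positivity)]
  congr 1
  have e1 : Real.exp (-(m - Real.log Z)) = Z * Real.exp (-m) := by
    rw [show -(m - Real.log Z) = Real.log Z + (-m) by ring, Real.exp_add, Real.exp_log hZ]
  have e2 : C * Real.exp (-a) = Z * Real.exp (-m) := by
    rw [hCZ, hadef, show -(m - s i) = -m + s i by ring, Real.exp_add]
    field_simp
  rw [e1, e2, hCZ, inv_div]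
end
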